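/- arXiv:2511.00404 — 5 statements merged into one kernel-verified Lean document; each statement's English description precedes it below -/
import Mathlib

section
/- If G is a C-expander graph for some C ≥ 3 on an even number of vertices, then G contains a perfect matching. -/
/-- The external neighborhood of a vertex set `X`: vertices outside `X`
with a neighbor in `X`. -/
def extNbhd {V : Type*} [Fintype V] [DecidableEq V] (G : SimpleGraph V)
    [DecidableRel G.Adj] (X : Finset V) : Finset V :=
  Finset.univ.filter (fun v => v ∉ X ∧ ∃ x ∈ X, G.Adj x v)

/-- A graph `G` on `n` vertices is a `C`-expander if every vertex set `X` with
`|X| < n/(2C)` satisfies `|N(X)| ≥ C|X|`, and there is an edge between any two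
disjoint vertex sets each of size at least `n/(2C)`. -/
def IsCExpander {V : Type*} [Fintype V] [DecidableEq V] (G : SimpleGraph V)
    [DecidableRel G.Adj] (C : ℝ) : Prop :=
  (∀ X : Finset V, (X.card : ℝ) < (Fintype.card V : ℝ) / (2 * C) →
      C * X.card ≤ ((extNbhd G X).card : ℝ)) ∧
  (∀ A B : Finset V, Disjoint A B → (Fintype.card V : ℝ) / (2 * C) ≤ A.card →
      (Fintype.card V : ℝ) / (2 * C) ≤ B.card → ∃ a ∈ A, ∃ b ∈ B, G.Adj a b)

set_option linter.unusedSectionVars false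
set_option linter.unusedVariables false
set_option maxHeartbeats 1000000

open Finset SimpleGraph

namespace PMaux

variable {V : Type*} [Fintype V] [DecidableEq V]

/-- Graph obtained from `G` by deleting all edges meeting `u`. -/
def del (G : SimpleGraph V) (u : Set V) : SimpleGraph V where
  Adj x y := G.Adj x y ∧ x ∉ u ∧ y ∉ u
  symm := ⟨fun x y h => ⟨h.1.symm, h.2.2, h.2.1⟩⟩
  loopless := ⟨fun x h => G.loopless.irrefl x h.1⟩

lemma del_adj {G : SimpleGraph V} {u : Set V} {x y : V} :
    (del G u).Adj x y ↔ G.Adj x y ∧ x ∉ u ∧ y ∉ u := Iff.rfl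

lemma del_le (G : SimpleGraph V) (u : Set V) : del G u ≤ G := fun _ _ h => h.1

lemma del_mono (G : SimpleGraph V) {u v : Set V} (h : u ⊆ v) : del G v ≤ del G u :=
  fun _ _ hadj => ⟨hadj.1, fun hx => hadj.2.1 (h hx), fun hy => hadj.2.2 (h hy)⟩

/-- number of odd components of `G - u` (the ones avoiding `u`). -/
noncomputable def q (G : SimpleGraph V) (u : Set V) : ℕ :=
  Nat.card {c : (del G u).ConnectedComponent | Odd (Nat.card c.supp) ∧ c.supp ⊆ uᶜ}

noncomputable def crep {K : SimpleGraph V} (c : K.ConnectedComponent) : V :=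
  c.exists_rep.choose

lemma crep_spec {K : SimpleGraph V} (c : K.ConnectedComponent) :
    K.connectedComponentMk (crep c) = c := c.exists_rep.choose_spec

lemma crep_mem {K : SimpleGraph V} (c : K.ConnectedComponent) : crep c ∈ c.supp := by
  rw [ConnectedComponent.mem_supp_iff, crep_spec]

lemma supp_nonempty {K : SimpleGraph V} (c : K.ConnectedComponent) : c.supp.Nonempty :=
  ⟨crep c, crep_mem c⟩

lemma comp_eq_of_supp_eq {K : SimpleGraph V} {c d : K.ConnectedComponent}
    (h : c.supp = d.supp) : c = d := by
  have h1 := crep_mem c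
  rw [h, ConnectedComponent.mem_supp_iff, crep_spec] at h1
  exact h1

lemma supp_closed {K : SimpleGraph V} (c : K.ConnectedComponent) ⦃x y : V⦄
    (hx : x ∈ c.supp) (h : K.Adj x y) : y ∈ c.supp := by
  rw [ConnectedComponent.mem_supp_iff] at hx ⊢
  rw [← hx]
  exact ConnectedComponent.sound h.symm.reachable

lemma walk_end_mem {K : SimpleGraph V} {s : Set V}
    (hcl : ∀ ⦃x y : V⦄, x ∈ s → K.Adj x y → y ∈ s) {a b : V} (p : K.Walk a b)
    (ha : a ∈ s) : b ∈ s := by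
  induction p with
  | nil => exact ha
  | cons h p ih => exact ih (hcl ha h)

lemma reachable_transfer {K K' : SimpleGraph V} {s : Set V}
    (hs : ∀ ⦃x y : V⦄, x ∈ s → K'.Adj x y → y ∈ s)
    (hadj : ∀ ⦃x y : V⦄, x ∈ s → y ∈ s → K'.Adj x y → K.Adj x y)
    {a b : V} (p : K'.Walk a b) (ha : a ∈ s) : K.Reachable a b := by
  induction p with
  | nil => exact Reachable.refl _
  | @cons u v w h p ih =>
      have hv : v ∈ s := hs ha h
      exact ((hadj ha hv h).reachable).trans (ih hv)

/-- a component of the smaller graph whose support is closed under edges of the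
larger graph is a component of the larger graph. -/
lemma supp_eq_up {K K' : SimpleGraph V} (hle : K ≤ K') (c : K.ConnectedComponent)
    (hcl : ∀ ⦃x y : V⦄, x ∈ c.supp → K'.Adj x y → y ∈ c.supp) :
    (K'.connectedComponentMk (crep c)).supp = c.supp := by
  ext w
  simp only [ConnectedComponent.mem_supp_iff]
  constructor
  · intro h
    have hr : K'.Reachable (crep c) w := by
      have := (ConnectedComponent.eq (G := K')).mp (h.trans rfl)
      exact this.symm
    obtain ⟨p⟩ := hr
    exact walk_end_mem hcl p (crep_mem c)
  · intro hw
    have hr : K.Reachable w (crep c) := by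
      have h1 : K.connectedComponentMk w = K.connectedComponentMk (crep c) := by
        rw [crep_spec]; exact hw
      exact (ConnectedComponent.eq (G := K)).mp h1
    exact ConnectedComponent.sound (hr.mono hle)

/-- a component of the larger graph whose support is mutually connected in the
smaller graph is a component of the smaller graph. -/
lemma supp_eq_down {K K' : SimpleGraph V} (hle : K ≤ K') (c : K'.ConnectedComponent)
    (hadj : ∀ ⦃x y : V⦄, x ∈ c.supp → y ∈ c.supp → K'.Adj x y → K.Adj x y) :
    (K.connectedComponentMk (crep c)).supp = c.supp := by
  ext w
  simp only [ConnectedComponent.mem_supp_iff]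
  constructor
  · intro h
    have hr : K.Reachable w (crep c) := (ConnectedComponent.eq (G := K)).mp h
    have hr' : K'.Reachable w (crep c) := hr.mono hle
    rw [← crep_spec c]
    exact ConnectedComponent.sound hr'
  · intro hw
    have hr' : K'.Reachable w (crep c) := by
      have h1 : K'.connectedComponentMk w = K'.connectedComponentMk (crep c) := by
        rw [crep_spec c]; exact hw
      exact (ConnectedComponent.eq (G := K')).mp h1
    obtain ⟨p⟩ := hr'
    exact ConnectedComponent.sound (reachable_transfer (supp_closed c) hadj p hw)

lemma supp_of_isolated {K : SimpleGraph V} {v : V} (h : ∀ w, ¬ K.Adj v w) :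
    (K.connectedComponentMk v).supp = {v} := by
  ext w
  simp only [ConnectedComponent.mem_supp_iff, Set.mem_singleton_iff]
  constructor
  · intro hw
    have hr : K.Reachable v w := ((ConnectedComponent.eq (G := K)).mp hw).symm
    obtain ⟨p⟩ := hr
    cases p with
    | nil => rfl
    | cons hadj p => exact absurd hadj (h _)
  · rintro rfl; rfl

lemma comp_cases {G : SimpleGraph V} {u : Set V} (c : (del G u).ConnectedComponent) :
    c.supp ⊆ uᶜ ∨ ∃ v ∈ u, c.supp = {v} := by
  by_cases h : crep c ∈ u
  · refine Or.inr ⟨crep c, h, ?_⟩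
    have h5 := supp_of_isolated (K := del G u) (v := crep c)
      (fun w hadj => (del_adj.mp hadj).2.1 h)
    rw [crep_spec] at h5
    exact h5
  · left
    intro w hw
    by_contra hwu
    simp only [Set.mem_compl_iff, not_not] at hwu
    have h1 : c = (del G u).connectedComponentMk w := (ConnectedComponent.mem_supp_iff _ _).mp hw |>.symm
    have h2 : ((del G u).connectedComponentMk w).supp = {w} :=
      supp_of_isolated (fun z hadj => (del_adj.mp hadj).2.1 hwu)
    have h3 : c.supp = {w} := by rw [h1]; exact h2
    have h4 := crep_mem c
    rw [h3, Set.mem_singleton_iff] at h4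
    exact h (by rw [h4]; exact hwu)


lemma q_eq_ncard (G : SimpleGraph V) (u : Set V) :
    q G u = {c : (del G u).ConnectedComponent |
      Odd (Nat.card c.supp) ∧ c.supp ⊆ uᶜ}.ncard :=
  Nat.card_coe_set_eq _

lemma preserved {G : SimpleGraph V} {u u2 : Set V} (hsub : u ⊆ u2)
    (c : (del G u).ConnectedComponent) (hd : ∀ x ∈ c.supp, x ∉ u2) :
    ((del G u2).connectedComponentMk (crep c)).supp = c.supp :=
  supp_eq_down (del_mono G hsub) c
    (fun x y hx hy hadj => ⟨hadj.1, hd x hx, hd y hy⟩)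

lemma promoted {G : SimpleGraph V} {u u'' : Set V} (hsub : u'' ⊆ u)
    (c : (del G u).ConnectedComponent)
    (hcl : ∀ ⦃x y : V⦄, x ∈ c.supp → (del G u'').Adj x y → y ∈ c.supp) :
    ((del G u'').connectedComponentMk (crep c)).supp = c.supp :=
  supp_eq_up (del_mono G hsub) c hcl

/-- Parity of the number of odd components. -/
lemma q_parity (G : SimpleGraph V) (u : Set V) (hn : Even (Fintype.card V)) :
    Even (q G u) ↔ Even (Nat.card u) := by
  classical
  set K := del G u with hK
  set A : Set K.ConnectedComponent := {c | Odd (Nat.card c.supp) ∧ c.supp ⊆ uᶜ} with hA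
  set B : Set K.ConnectedComponent := {c | Odd (Nat.card c.supp) ∧ ¬ c.supp ⊆ uᶜ} with hB
  have hunion : A ∪ B = {c | Odd (Nat.card c.supp)} := by
    ext c; by_cases h : c.supp ⊆ uᶜ <;> simp [hA, hB, h]
  have hdisj : Disjoint A B := by
    rw [Set.disjoint_left]
    rintro c ⟨_, h1⟩ ⟨_, h2⟩
    exact h2 h1
  have hcardB : B.ncard = Nat.card u := by
    rw [← Nat.card_coe_set_eq]
    refine (Nat.card_eq_of_bijective (fun (v : u) =>
      (⟨K.connectedComponentMk v, ?_, ?_⟩ : B)) ⟨?_, ?_⟩).symm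
    · -- Odd card supp
      have hsupp : (K.connectedComponentMk (v : V)).supp = {(v : V)} :=
        supp_of_isolated (fun w hadj => (del_adj.mp hadj).2.1 v.2)
      rw [hsupp, Nat.card_coe_set_eq, Set.ncard_singleton]
      exact odd_one
    · -- not subset
      have hsupp : (K.connectedComponentMk (v : V)).supp = {(v : V)} :=
        supp_of_isolated (fun w hadj => (del_adj.mp hadj).2.1 v.2)
      rw [hsupp]
      intro hsub
      exact (hsub rfl) v.2
    · -- injective
      intro v v' h
      have h1 : K.connectedComponentMk (v : V) = K.connectedComponentMk (v' : V) :=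
        congrArg Subtype.val h
      have hs : ({(v : V)} : Set V) = {(v' : V)} := by
        rw [← supp_of_isolated (fun w hadj => (del_adj.mp hadj).2.1 v.2),
          ← supp_of_isolated (fun w hadj => (del_adj.mp hadj).2.1 v'.2), h1]
      exact Subtype.ext (Set.singleton_eq_singleton_iff.mp hs)
    · -- surjective
      rintro ⟨c, hodd, hnsub⟩
      obtain ⟨w, hw, hwu⟩ := Set.not_subset.mp hnsub
      simp only [Set.mem_compl_iff, not_not] at hwu
      refine ⟨⟨w, hwu⟩, Subtype.ext ?_⟩
      exact (ConnectedComponent.mem_supp_iff _ _).mp hw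
  have htot : Even ((A ∪ B).ncard) := by
    rw [hunion]
    have hodd := (odd_ncard_oddComponents K).not
    rw [Nat.not_odd_iff_even, Nat.not_odd_iff_even] at hodd
    have hset : {c : K.ConnectedComponent | Odd (Nat.card c.supp)} = K.oddComponents := by
      ext c; simp only [Set.mem_setOf_eq, Nat.card_coe_set_eq]
    rw [hset]
    exact hodd.mpr (by rwa [Nat.card_eq_fintype_card])
  rw [Set.ncard_union_eq hdisj (Set.toFinite _) (Set.toFinite _)] at htot
  rw [q_eq_ncard, ← hA]
  rw [← hcardB]
  rw [Nat.even_add] at htot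
  constructor
  · intro h; exact htot.mp h
  · intro h; exact htot.mpr h

/-- Lower bound for the number of odd components after deleting more vertices:
surviving old components plus new ones. -/
lemma q_lower_add {G : SimpleGraph V} {u u2 : Set V} (hsub : u ⊆ u2)
    (A : Set ((del G u).ConnectedComponent))
    (hA : ∀ c ∈ A, Odd (Nat.card c.supp) ∧ (∀ x ∈ c.supp, x ∉ u2))
    (B : Set ((del G u2).ConnectedComponent))
    (hB : ∀ d ∈ B, Odd (Nat.card d.supp) ∧ d.supp ⊆ u2ᶜ)
    (hdisj : ∀ c ∈ A, ∀ d ∈ B, ∀ x, x ∈ c.supp → x ∉ d.supp) :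
    A.ncard + B.ncard ≤ q G u2 := by
  classical
  have hpres : ∀ c : A, ((del G u2).connectedComponentMk (crep (c : (del G u).ConnectedComponent))).supp
      = (c : (del G u).ConnectedComponent).supp :=
    fun c => preserved hsub _ (hA _ c.2).2
  set T : Set ((del G u2).ConnectedComponent) :=
    {e | Odd (Nat.card e.supp) ∧ e.supp ⊆ u2ᶜ} with hT
  have hf : ∀ c : A, (del G u2).connectedComponentMk (crep (c : (del G u).ConnectedComponent)) ∈ T := by
    intro c
    constructor
    · rw [hpres c]; exact (hA _ c.2).1
    · rw [hpres c]; intro x hx; exact (hA _ c.2).2 x hx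
  have hg : ∀ d : B, (d : (del G u2).ConnectedComponent) ∈ T := by
    intro d; exact ⟨(hB _ d.2).1, (hB _ d.2).2⟩
  set F : (A ⊕ B) → T := fun z =>
    Sum.elim (fun c => ⟨_, hf c⟩) (fun d => ⟨_, hg d⟩) z with hF
  have hinj : Function.Injective F := by
    rintro (c | d) (c' | d') h
    · have hs : (c : (del G u).ConnectedComponent).supp = (c' : (del G u).ConnectedComponent).supp := by
        rw [← hpres c, ← hpres c']
        exact congrArg (fun (t : T) => ConnectedComponent.supp (t : (del G u2).ConnectedComponent)) h
      exact congrArg Sum.inl (Subtype.ext (comp_eq_of_supp_eq hs))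
    · exfalso
      have hs : (c : (del G u).ConnectedComponent).supp = (d' : (del G u2).ConnectedComponent).supp := by
        rw [← hpres c]
        exact congrArg (fun (t : T) => ConnectedComponent.supp (t : (del G u2).ConnectedComponent)) h
      obtain ⟨x, hx⟩ := supp_nonempty (c : (del G u).ConnectedComponent)
      exact hdisj _ c.2 _ d'.2 x hx (hs ▸ hx)
    · exfalso
      have hs : (c' : (del G u).ConnectedComponent).supp = (d : (del G u2).ConnectedComponent).supp := by
        rw [← hpres c']
        exact congrArg (fun (t : T) => ConnectedComponent.supp (t : (del G u2).ConnectedComponent)) h.symm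
      obtain ⟨x, hx⟩ := supp_nonempty (c' : (del G u).ConnectedComponent)
      exact hdisj _ c'.2 _ d.2 x hx (hs ▸ hx)
    · have : (d : (del G u2).ConnectedComponent) = (d' : (del G u2).ConnectedComponent) :=
        congrArg (fun (t : T) => (t : (del G u2).ConnectedComponent)) h
      exact congrArg Sum.inr (Subtype.ext this)
  have hcard := Nat.card_le_card_of_injective F hinj
  rwa [Nat.card_sum, Nat.card_coe_set_eq, Nat.card_coe_set_eq] at hcard

/-- Lower bound for the number of odd components after deleting fewer vertices,
for components whose support is closed under the new edges. -/
lemma q_lower_promote {G : SimpleGraph V} {u u'' : Set V} (hsub : u'' ⊆ u)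
    (A : Set ((del G u).ConnectedComponent))
    (hA : ∀ c ∈ A, Odd (Nat.card c.supp) ∧ c.supp ⊆ uᶜ ∧
      (∀ ⦃x y : V⦄, x ∈ c.supp → (del G u'').Adj x y → y ∈ c.supp)) :
    A.ncard ≤ q G u'' := by
  classical
  have hpres : ∀ c : A, ((del G u'').connectedComponentMk (crep (c : (del G u).ConnectedComponent))).supp
      = (c : (del G u).ConnectedComponent).supp :=
    fun c => promoted hsub _ (hA _ c.2).2.2
  set T : Set ((del G u'').ConnectedComponent) :=
    {e | Odd (Nat.card e.supp) ∧ e.supp ⊆ u''ᶜ} with hT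
  have hf : ∀ c : A, (del G u'').connectedComponentMk (crep (c : (del G u).ConnectedComponent)) ∈ T := by
    intro c
    constructor
    · rw [hpres c]; exact (hA _ c.2).1
    · rw [hpres c]
      exact subset_trans (hA _ c.2).2.1 (Set.compl_subset_compl.mpr hsub)
  set F : A → T := fun c => ⟨_, hf c⟩ with hF
  have hinj : Function.Injective F := by
    intro c c' h
    have hs : (c : (del G u).ConnectedComponent).supp = (c' : (del G u).ConnectedComponent).supp := by
      rw [← hpres c, ← hpres c']
      exact congrArg (fun (t : T) => ConnectedComponent.supp (t : (del G u'').ConnectedComponent)) h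
    exact Subtype.ext (comp_eq_of_supp_eq hs)
  have hcard := Nat.card_le_card_of_injective F hinj
  rwa [Nat.card_coe_set_eq] at hcard



lemma compl_del_set (W S : Finset V) : ((↑Wᶜ ∪ ↑S : Set V))ᶜ = ↑W \ ↑S := by
  rw [Set.compl_union, Finset.coe_compl, compl_compl, Set.diff_eq]

lemma natCard_coe_finset (F : Finset V) : Nat.card ↥(↑F : Set V) = F.card := by
  rw [Nat.card_coe_set_eq, Set.ncard_coe_finset]

/-- Tutte condition relative to a finset `W`. -/
def TCond (G : SimpleGraph V) (W : Finset V) : Prop :=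
  ∀ S : Finset V, S ⊆ W → q G (↑Wᶜ ∪ ↑S) ≤ S.card

lemma q_parity2 (G : SimpleGraph V) {W S : Finset V} (hV : Even (Fintype.card V))
    (hSW : S ⊆ W) : Even (q G (↑Wᶜ ∪ ↑S)) ↔ Even (W.card + S.card) := by
  rw [q_parity G _ hV]
  have h1 : (↑Wᶜ ∪ ↑S : Set V) = ↑(Wᶜ ∪ S) := by rw [Finset.coe_union]
  rw [h1, natCard_coe_finset]
  have hd : Disjoint Wᶜ S := by
    rw [Finset.disjoint_left]
    intro x hx hxS
    exact (Finset.mem_compl.mp hx) (hSW hxS)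
  rw [Finset.card_union_of_disjoint hd, Finset.card_compl]
  have hWn : W.card ≤ Fintype.card V := Finset.card_le_univ W
  obtain ⟨k, hk⟩ := hV
  rw [Nat.even_iff, Nat.even_iff]
  omega


lemma all_odd (G : SimpleGraph V) (hV : Even (Fintype.card V)) {W S : Finset V}
    (hSW : S ⊆ W) (hTC : TCond G W) {u : Set V} (hu : u = ↑Wᶜ ∪ ↑S)
    (hSq : q G u = S.card)
    (hSmax : ∀ S' : Finset V, S' ⊆ W → S'.Nonempty → q G (↑Wᶜ ∪ ↑S') = S'.card →
      S'.card ≤ S.card)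
    (c : (del G u).ConnectedComponent)
    (hc : c.supp ⊆ uᶜ) :
    Odd (Nat.card c.supp) := by
  classical
  by_contra hodd'
  rw [Nat.not_odd_iff_even] at hodd'
  set v : V := crep c with hv
  have hvc : v ∈ c.supp := crep_mem c
  have hvW : v ∈ W ∧ v ∉ S := by
    have h0 := hc hvc
    rw [hu, compl_del_set] at h0
    exact ⟨h0.1, fun h => h0.2 (Finset.mem_coe.mpr h)⟩
  set S' : Finset V := insert v S with hS'
  have hvS : v ∉ S := hvW.2
  have hS'W : S' ⊆ W := Finset.insert_subset hvW.1 hSW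
  have hu2 : (↑Wᶜ ∪ ↑S' : Set V) = u ∪ {v} := by
    rw [hS', Finset.coe_insert, hu]
    ext x
    simp only [Set.mem_union, Set.mem_insert_iff, Set.mem_singleton_iff, Finset.coe_insert]
    tauto
  have hle2 : del G (u ∪ {v}) ≤ del G u := del_mono G Set.subset_union_left
  have hsubc : Odd (Nat.card c.supp) ↔ Odd (Nat.card {d : (del G (u ∪ {v})).ConnectedComponent |
      d.supp ⊆ c.supp ∧ Odd (Nat.card d.supp)}) := by
    have h := ConnectedComponent.odd_oddComponents_ncard_subset_supp _ hle2 c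
    rw [Nat.card_coe_set_eq, Nat.card_coe_set_eq, ← h]
    have hs : {d : (del G (u ∪ {v})).ConnectedComponent | d.supp ⊆ c.supp ∧ Odd (Nat.card d.supp)}
        = {d ∈ (del G (u ∪ {v})).oddComponents | d.supp ⊆ c.supp} := by
      ext d; simp only [Set.mem_setOf_eq, Set.mem_sep_iff, Nat.card_coe_set_eq]; exact and_comm
    rw [hs]
  have heven2 : Even (Nat.card {d : (del G (u ∪ {v})).ConnectedComponent |
      d.supp ⊆ c.supp ∧ Odd (Nat.card d.supp)}) := by
    rw [← Nat.not_odd_iff_even]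
    intro hcon
    rw [← Nat.not_odd_iff_even] at hodd'
    exact hodd' (hsubc.mpr hcon)
  have hviso : ((del G (u ∪ {v})).connectedComponentMk v).supp = {v} :=
    supp_of_isolated (fun w hadj => (del_adj.mp hadj).2.1 (Or.inr rfl))
  have hvmem : (del G (u ∪ {v})).connectedComponentMk v ∈
      {d : (del G (u ∪ {v})).ConnectedComponent |
        d.supp ⊆ c.supp ∧ Odd (Nat.card d.supp)} := by
    constructor
    · rw [hviso]; exact Set.singleton_subset_iff.mpr hvc
    · rw [hviso, Nat.card_coe_set_eq, Set.ncard_singleton]; exact odd_one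
  have h2 : 1 < {d : (del G (u ∪ {v})).ConnectedComponent |
      d.supp ⊆ c.supp ∧ Odd (Nat.card d.supp)}.ncard := by
    have hpos : 0 < {d : (del G (u ∪ {v})).ConnectedComponent |
        d.supp ⊆ c.supp ∧ Odd (Nat.card d.supp)}.ncard :=
      (Set.ncard_pos (Set.toFinite _)).mpr ⟨_, hvmem⟩
    rw [Nat.card_coe_set_eq] at heven2
    obtain ⟨k, hk⟩ := heven2
    omega
  obtain ⟨d, hd, hdne⟩ := Set.exists_ne_of_one_lt_ncard h2
    ((del G (u ∪ {v})).connectedComponentMk v)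
  have hdsub : d.supp ⊆ (u ∪ {v})ᶜ := by
    intro x hx
    have hxc : x ∈ c.supp := hd.1 hx
    have hxu : x ∉ u := hc hxc
    have hxv : x ≠ v := by
      rintro rfl
      exact hdne ((ConnectedComponent.mem_supp_iff _ _).mp hx).symm
    simp only [Set.mem_compl_iff, Set.mem_union, Set.mem_singleton_iff]
    tauto
  have hql := q_lower_add (G := G) (u := u) (u2 := u ∪ {v}) Set.subset_union_left
    {c' : (del G u).ConnectedComponent | Odd (Nat.card c'.supp) ∧ c'.supp ⊆ uᶜ}
    (by
      intro c' hc'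
      refine ⟨hc'.1, fun x hx hxu2 => ?_⟩
      have hne : c' ≠ c := by
        rintro rfl
        rw [← Nat.not_odd_iff_even] at hodd'
        exact hodd' hc'.1
      rcases hxu2 with hxu | hxv
      · exact (hc'.2 hx) hxu
      · have hdisj := pairwise_disjoint_supp_connectedComponent (del G u) hne
        rw [Set.mem_singleton_iff] at hxv
        subst hxv
        exact Set.disjoint_left.mp hdisj hx hvc)
    {d}
    (by rintro d' rfl; exact ⟨hd.2, hdsub⟩)
    (by
      rintro c' hc' d' rfl x hx hxd
      have hne : c' ≠ c := by
        rintro rfl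
        rw [← Nat.not_odd_iff_even] at hodd'
        exact hodd' hc'.1
      have hdisj := pairwise_disjoint_supp_connectedComponent (del G u) hne
      exact Set.disjoint_left.mp hdisj hx (hd.1 hxd))
  rw [Set.ncard_singleton] at hql
  rw [← q_eq_ncard, hSq] at hql
  have hTC' := hTC S' hS'W
  rw [hu2] at hTC'
  have hcard : S'.card = S.card + 1 := Finset.card_insert_of_notMem hvS
  have heq : q G (↑Wᶜ ∪ ↑S') = S'.card := by rw [hu2]; omega
  have := hSmax S' hS'W (Finset.insert_nonempty _ _) heq
  omega

lemma tcond_sub (G : SimpleGraph V) (hV : Even (Fintype.card V)) {W S : Finset V}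
    (hSW : S ⊆ W) (hSne : S.Nonempty) (hTC : TCond G W) {u : Set V}
    (hu : u = ↑Wᶜ ∪ ↑S) (hSq : q G u = S.card)
    (hSmax : ∀ S' : Finset V, S' ⊆ W → S'.Nonempty → q G (↑Wᶜ ∪ ↑S') = S'.card →
      S'.card ≤ S.card)
    (c : (del G u).ConnectedComponent) (hcodd : Odd (Nat.card c.supp))
    (hc : c.supp ⊆ uᶜ)
    {a : V} (ha : a ∈ c.supp) {Wi : Finset V} (hWi : ↑Wi = c.supp \ {a}) :
    TCond G Wi := by
  classical
  intro T hTWi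
  by_contra hq
  push_neg at hq
  have hsuppW : c.supp ⊆ ↑W \ ↑S := by rw [← compl_del_set W S, ← hu]; exact hc
  have haW : a ∈ W := Finset.mem_coe.mp (hsuppW ha).1
  have haS : a ∉ S := fun h => (hsuppW ha).2 (Finset.mem_coe.mpr h)
  have hTc : ∀ x ∈ T, x ∈ c.supp ∧ x ≠ a := by
    intro x hx
    have h1 : (x : V) ∈ (↑Wi : Set V) := Finset.mem_coe.mpr (hTWi hx)
    rw [hWi] at h1
    exact ⟨h1.1, h1.2⟩
  have haT : a ∉ T := fun h => (hTc a h).2 rfl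
  have hTS : ∀ x ∈ T, x ∉ S := fun x hx h =>
    (hsuppW (hTc x hx).1).2 (Finset.mem_coe.mpr h)
  have hTW : T ⊆ W := fun x hx => Finset.mem_coe.mp (hsuppW (hTc x hx).1).1
  -- cardinality of Wi
  have hsuppfin : c.supp.Finite := Set.toFinite _
  have hWicard : Wi.card = c.supp.ncard - 1 := by
    rw [← Set.ncard_coe_finset, hWi, Set.ncard_diff_singleton_of_mem ha]
  have hcodd' : Odd c.supp.ncard := by rwa [← Nat.card_coe_set_eq]
  have hWieven : Even Wi.card := by
    rw [hWicard]
    obtain ⟨k, hk⟩ := hcodd'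
    exact ⟨k, by omega⟩
  -- parity boost
  have hpar := q_parity2 G (W := Wi) (S := T) hV hTWi
  have hq2 : T.card + 2 ≤ q G (↑Wiᶜ ∪ ↑T) := by
    have h1 : (q G (↑Wiᶜ ∪ ↑T)) % 2 = (Wi.card + T.card) % 2 := by
      rcases Nat.even_or_odd (q G (↑Wiᶜ ∪ ↑T)) with h | h
      · have h3 := hpar.mp h
        rw [Nat.even_iff] at h h3
        omega
      · have h2 : ¬ Even (Wi.card + T.card) :=
          fun hc2 => (Nat.not_even_iff_odd.mpr h) (hpar.mpr hc2)
        rw [Nat.odd_iff] at h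
        rw [Nat.not_even_iff] at h2
        omega
    rw [Nat.even_iff] at hWieven
    omega
  set D2 : Set V := ↑Wiᶜ ∪ ↑T with hD2
  have hD2compl : D2ᶜ = (c.supp \ {a}) \ ↑T := by rw [hD2, compl_del_set, hWi]
  set S' : Finset V := insert a S ∪ T with hS'
  have hS'card : S'.card = S.card + 1 + T.card := by
    rw [hS', Finset.card_union_of_disjoint, Finset.card_insert_of_notMem haS]
    rw [Finset.disjoint_left]
    intro x hx hxT
    rcases Finset.mem_insert.mp hx with rfl | hxS
    · exact haT hxT
    · exact hTS x hxT hxS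
  have hS'W : S' ⊆ W := Finset.union_subset (Finset.insert_subset haW hSW) hTW
  set D1 : Set V := ↑Wᶜ ∪ ↑S' with hD1
  have haS' : a ∈ S' := Finset.mem_union_left _ (Finset.mem_insert_self a S)
  have hTS' : ∀ x ∈ T, x ∈ S' := fun x hx => Finset.mem_union_right _ hx
  have hSS' : S ⊆ S' := fun x hx =>
    Finset.mem_union_left _ (Finset.mem_insert_of_mem hx)
  have huD1 : u ⊆ D1 := by
    rw [hu, hD1]
    exact Set.union_subset_union_right _ (Finset.coe_subset.mpr hSS')
  have hD1D2 : D1 ⊆ D2 := by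
    intro x hx
    rw [hD1, Set.mem_union] at hx
    rw [hD2, Set.mem_union]
    have hmemWic : ∀ z : V, z ∉ c.supp \ {a} → z ∈ (↑(Wiᶜ) : Set V) := by
      intro z hz
      rw [Finset.coe_compl, Set.mem_compl_iff, hWi]
      exact hz
    rcases hx with hxW | hxS'
    · left
      apply hmemWic
      intro hmem
      have hxW' : x ∉ (↑W : Set V) := by
        rwa [Finset.coe_compl, Set.mem_compl_iff] at hxW
      exact hxW' (hsuppW hmem.1).1
    · rcases Finset.mem_union.mp (Finset.mem_coe.mp hxS') with hxi | hxT
      · rcases Finset.mem_insert.mp hxi with rfl | hxS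
        · left; apply hmemWic; intro hmem; exact hmem.2 rfl
        · left; apply hmemWic; intro hmem
          exact (hsuppW hmem.1).2 (Finset.mem_coe.mpr hxS)
      · right; exact Finset.mem_coe.mpr hxT
  -- promoted components of del G D2
  set Bsrc : Set ((del G D2).ConnectedComponent) :=
    {d | Odd (Nat.card d.supp) ∧ d.supp ⊆ D2ᶜ} with hBsrc
  have hBsub : ∀ d ∈ Bsrc, d.supp ⊆ (c.supp \ {a}) \ ↑T := by
    intro d hd
    rw [← hD2compl]; exact hd.2
  have hprom : ∀ d ∈ Bsrc,
      ((del G D1).connectedComponentMk (crep d)).supp = d.supp := by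
    intro d hd
    apply promoted hD1D2 d
    intro x y hx hadj
    obtain ⟨hGxy, hxD1, hyD1⟩ := del_adj.mp hadj
    have hxc : x ∈ c.supp := ((hBsub d hd) hx).1.1
    have hyu : y ∉ u := fun h => hyD1 (huD1 h)
    have hxu : x ∉ u := hc hxc
    have hyc : y ∈ c.supp := supp_closed c hxc (del_adj.mpr ⟨hGxy, hxu, hyu⟩)
    have hya : y ≠ a := by
      rintro rfl
      exact hyD1 (by rw [hD1]; exact Or.inr (Finset.mem_coe.mpr haS'))
    have hyT : y ∉ ↑T := fun h =>
      hyD1 (by rw [hD1]; exact Or.inr (Finset.mem_coe.mpr (hTS' y (Finset.mem_coe.mp h))))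
    have hyD2 : y ∈ D2ᶜ := by rw [hD2compl]; exact ⟨⟨hyc, hya⟩, hyT⟩
    exact supp_closed d hx (del_adj.mpr ⟨hGxy, hd.2 hx, hyD2⟩)
  have hucomplset : uᶜ = ↑W \ ↑S := by rw [hu, compl_del_set]
  set B : Set ((del G D1).ConnectedComponent) :=
    (fun d => (del G D1).connectedComponentMk (crep d)) '' Bsrc with hB
  have hinj : Set.InjOn (fun d => (del G D1).connectedComponentMk (crep d)) Bsrc := by
    intro d hd d' hd' hdd'
    apply comp_eq_of_supp_eq
    have h1 := hprom d hd
    have h2 := hprom d' hd'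
    simp only at hdd'
    rw [← h1, ← h2, hdd']
  have hBcard : B.ncard = q G D2 := by
    rw [hB, Set.ncard_image_of_injOn hinj, hBsrc, ← q_eq_ncard]
  set A : Set ((del G u).ConnectedComponent) :=
    {c' | Odd (Nat.card c'.supp) ∧ c'.supp ⊆ uᶜ} \ {c} with hA
  have hcmem : c ∈ {c' : (del G u).ConnectedComponent |
      Odd (Nat.card c'.supp) ∧ c'.supp ⊆ uᶜ} := ⟨hcodd, hc⟩
  have hAcard : A.ncard = S.card - 1 := by
    rw [hA, Set.ncard_diff_singleton_of_mem hcmem, ← q_eq_ncard, hSq]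
  have hql := q_lower_add huD1 A ?_ B ?_ ?_
  rotate_left
  · -- A condition
    intro c' hc'
    rw [hA] at hc'
    obtain ⟨⟨hodd', hsub'⟩, hne⟩ := hc'
    rw [Set.mem_singleton_iff] at hne
    refine ⟨hodd', fun x hx hxD1 => ?_⟩
    have hxWS : x ∈ (↑W : Set V) \ ↑S := by rw [← hucomplset]; exact hsub' hx
    have hdisj := pairwise_disjoint_supp_connectedComponent (del G u) hne
    have hxc : x ∉ c.supp := Set.disjoint_left.mp hdisj hx
    rw [hD1, Set.mem_union] at hxD1
    rcases hxD1 with h1 | h1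
    · have hxW' : x ∉ (↑W : Set V) := by
        rwa [Finset.coe_compl, Set.mem_compl_iff] at h1
      exact hxW' hxWS.1
    · rcases Finset.mem_union.mp (Finset.mem_coe.mp h1) with h2 | h2
      · rcases Finset.mem_insert.mp h2 with h4 | h3
        · exact hxc (h4 ▸ ha)
        · exact hxWS.2 (Finset.mem_coe.mpr h3)
      · exact hxc (hTc x h2).1
  · -- B condition
    intro e he
    rw [hB] at he
    obtain ⟨d, hd, rfl⟩ := he
    have hsupp := hprom d hd
    simp only at hsupp ⊢
    constructor
    · rw [hsupp]; exact hd.1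
    · rw [hsupp]
      intro x hx
      have hxmem := (hBsub d hd) hx
      have hxc : x ∈ c.supp := hxmem.1.1
      rw [hD1, compl_del_set]
      refine ⟨(hsuppW hxc).1, fun hxS' => ?_⟩
      rcases Finset.mem_union.mp (Finset.mem_coe.mp hxS') with h2 | h2
      · rcases Finset.mem_insert.mp h2 with h4 | h3
        · exact hxmem.1.2 h4
        · exact (hsuppW hxc).2 (Finset.mem_coe.mpr h3)
      · exact hxmem.2 (Finset.mem_coe.mpr h2)
  · -- disjointness
    intro c' hc' e he x hx hxe
    rw [hA] at hc'
    rw [hB] at he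
    obtain ⟨⟨hodd', hsub'⟩, hne⟩ := hc'
    obtain ⟨d, hd, rfl⟩ := he
    rw [Set.mem_singleton_iff] at hne
    have hdisj := pairwise_disjoint_supp_connectedComponent (del G u) hne
    have hxc : x ∉ c.supp := Set.disjoint_left.mp hdisj hx
    simp only at hxe
    rw [hprom d hd] at hxe
    exact hxc ((hBsub d hd) hxe).1.1
  -- conclude
  have hTCS' := hTC S' hS'W
  have hD1q : q G (↑Wᶜ ∪ ↑S') = q G D1 := by rw [hD1]
  have hSpos : 1 ≤ S.card := Finset.card_pos.mpr hSne
  have heq : q G (↑Wᶜ ∪ ↑S') = S'.card := by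
    rw [hD1q]; omega
  have hle := hSmax S' hS'W ⟨a, haS'⟩ heq
  omega

theorem key (G : SimpleGraph V) (hV : Even (Fintype.card V)) :
    ∀ (n : ℕ) (W : Finset V), W.card ≤ n → Even W.card → TCond G W →
    ∃ M : G.Subgraph, M.IsMatching ∧ M.verts = ↑W := by
  classical
  intro n
  induction n with
  | zero =>
      intro W hle _ _
      have hW : W = ∅ := Finset.card_eq_zero.mp (Nat.le_zero.mp hle)
      subst hW
      refine ⟨⊥, ?_, by simp⟩
      intro v hv
      simp only [Subgraph.verts_bot, Set.mem_empty_iff_false] at hv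
  | succ n ih =>
      intro W hWle hWeven hTC
      rcases Finset.eq_empty_or_nonempty W with hWe | hWne
      · subst hWe
        refine ⟨⊥, ?_, by simp⟩
        intro v hv
        simp only [Subgraph.verts_bot, Set.mem_empty_iff_false] at hv
      obtain ⟨v₀, hv₀⟩ := hWne
      have hv₀W : {v₀} ⊆ W := Finset.singleton_subset_iff.mpr hv₀
      have h𝒜mem : {v₀} ∈ W.powerset.filter
          (fun (S : Finset V) => S.Nonempty ∧ q G (↑Wᶜ ∪ ↑S) = S.card) := by
        rw [Finset.mem_filter, Finset.mem_powerset]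
        refine ⟨hv₀W, Finset.singleton_nonempty v₀, ?_⟩
        have h1 : q G (↑Wᶜ ∪ ↑({v₀} : Finset V)) ≤ 1 := by
          have h0 := hTC {v₀} hv₀W
          simpa using h0
        have h2 := q_parity2 G (W := W) (S := {v₀}) hV hv₀W
        rw [Finset.card_singleton] at h2 ⊢
        have h3 : ¬ Even (W.card + 1) := by
          rw [Nat.even_add_one]
          exact fun h => h hWeven
        have h4 : ¬ Even (q G (↑Wᶜ ∪ ↑({v₀} : Finset V))) := fun h => h3 (h2.mp h)
        rw [Nat.not_even_iff] at h4
        omega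
      obtain ⟨S, hSmem, hSmax'⟩ := Finset.exists_max_image
        (W.powerset.filter (fun (S : Finset V) => S.Nonempty ∧ q G (↑Wᶜ ∪ ↑S) = S.card))
        (fun S => S.card) ⟨{v₀}, h𝒜mem⟩
      rw [Finset.mem_filter, Finset.mem_powerset] at hSmem
      obtain ⟨hSW, hSne, hSq⟩ := hSmem
      have hSmax : ∀ S' : Finset V, S' ⊆ W → S'.Nonempty →
          q G (↑Wᶜ ∪ ↑S') = S'.card → S'.card ≤ S.card := by
        intro S' h1 h2 h3
        exact hSmax' S' (by rw [Finset.mem_filter, Finset.mem_powerset]; exact ⟨h1, h2, h3⟩)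
      have hodd : ∀ c : (del G (↑Wᶜ ∪ ↑S : Set V)).ConnectedComponent,
          c.supp ⊆ (↑Wᶜ ∪ ↑S : Set V)ᶜ → Odd (Nat.card c.supp) :=
        fun c hc => all_odd G hV hSW hTC rfl hSq hSmax c hc
      have hucompl : ((↑Wᶜ ∪ ↑S : Set V))ᶜ = ↑W \ ↑S := compl_del_set W S
      set ι := {c : (del G (↑Wᶜ ∪ ↑S : Set V)).ConnectedComponent //
        Odd (Nat.card c.supp) ∧ c.supp ⊆ (↑Wᶜ ∪ ↑S : Set V)ᶜ} with hι
      haveI : Fintype ι := Fintype.ofFinite ι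
      have hqι : q G (↑Wᶜ ∪ ↑S : Set V) = Nat.card ι := rfl
      have hιcard : Fintype.card ι = S.card := by
        rw [← hSq, hqι, Nat.card_eq_fintype_card]
      set t : ι → Finset V := fun i =>
        S.filter (fun s => ∃ x ∈ (i.val).supp, G.Adj x s) with ht
      have htS : ∀ i, t i ⊆ S := fun i => Finset.filter_subset _ _
      have hHall : ∀ s : Finset ι, s.card ≤ (s.biUnion t).card := by
        intro s
        have hbT : s.biUnion t ⊆ S := by
          intro x hx
          obtain ⟨i, hi, hxt⟩ := Finset.mem_biUnion.mp hx
          exact (Finset.mem_filter.mp hxt).1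
        have hsub2 : (↑Wᶜ ∪ ↑(s.biUnion t) : Set V) ⊆ (↑Wᶜ ∪ ↑S : Set V) :=
          Set.union_subset_union_right _ (Finset.coe_subset.mpr hbT)
        have hlow := q_lower_promote hsub2 (Subtype.val '' (↑s : Set ι)) ?_
        · have hAcard : (Subtype.val '' (↑s : Set ι)).ncard = s.card := by
            rw [Set.ncard_image_of_injective _ Subtype.val_injective,
              Set.ncard_coe_finset]
          have hTCs := hTC (s.biUnion t) (hbT.trans hSW)
          omega
        · rintro c ⟨i, hi, rfl⟩
          refine ⟨i.2.1, i.2.2, ?_⟩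
          intro x y hx hadj
          obtain ⟨hGxy, hxu, hyu⟩ := del_adj.mp hadj
          by_cases hyS : y ∈ S
          · exfalso
            apply hyu
            right
            exact Finset.mem_coe.mpr (Finset.mem_biUnion.mpr
              ⟨i, Finset.mem_coe.mp hi, Finset.mem_filter.mpr ⟨hyS, ⟨x, hx, hGxy⟩⟩⟩)
          · have hyu' : y ∉ (↑Wᶜ ∪ ↑S : Set V) := by
              rintro (h | h)
              · exact hyu (Or.inl h)
              · exact hyS (Finset.mem_coe.mp h)
            have hxu' : x ∉ (↑Wᶜ ∪ ↑S : Set V) := i.2.2 hx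
            exact supp_closed _ hx (del_adj.mpr ⟨hGxy, hxu', hyu'⟩)
      obtain ⟨f, hfinj, hft⟩ :=
        (Finset.all_card_le_biUnion_card_iff_exists_injective t).mp hHall
      have hfS : ∀ i, f i ∈ S := fun i => (Finset.mem_filter.mp (hft i)).1
      have hfadj : ∀ i : ι, ∃ x ∈ (i.val).supp, G.Adj x (f i) :=
        fun i => (Finset.mem_filter.mp (hft i)).2
      choose a ha hadj using hfadj
      have hfim : Finset.univ.image f = S := by
        apply Finset.eq_of_subset_of_card_le
        · intro y hy
          obtain ⟨i, _, rfl⟩ := Finset.mem_image.mp hy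
          exact hfS i
        · rw [Finset.card_image_of_injective _ hfinj, Finset.card_univ, hιcard]
      have hsuppWS : ∀ i : ι, (i.val).supp ⊆ (↑W : Set V) \ ↑S := fun i => by
        rw [← hucompl]; exact i.2.2
      have hMi : ∀ i : ι, ∃ Mi : G.Subgraph, Mi.IsMatching ∧
          Mi.verts = (i.val).supp \ {a i} := by
        intro i
        set Wi : Finset V := (Set.toFinite ((i.val).supp \ {a i})).toFinset with hWidef
        have hWicoe : (↑Wi : Set V) = (i.val).supp \ {a i} := Set.Finite.coe_toFinset _
        have hWicard : Wi.card = (i.val).supp.ncard - 1 := by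
          rw [← Set.ncard_coe_finset, hWicoe, Set.ncard_diff_singleton_of_mem (ha i)]
        have hoddi : Odd ((i.val).supp.ncard) := by
          have h0 := i.2.1
          rwa [Nat.card_coe_set_eq] at h0
        have hWieven : Even Wi.card := by
          obtain ⟨k, hk⟩ := hoddi
          rw [hWicard]
          exact ⟨k, by omega⟩
        have hsuppcard : (i.val).supp.ncard ≤ W.card - S.card := by
          have h1 : (i.val).supp ⊆ (↑(W \ S) : Set V) := by
            rw [Finset.coe_sdiff]; exact hsuppWS i
          have h2 := Set.ncard_le_ncard h1 (Set.toFinite _)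
          rwa [Set.ncard_coe_finset, Finset.card_sdiff_of_subset hSW] at h2
        have hScard1 : 1 ≤ S.card := Finset.card_pos.mpr hSne
        have hSlW : S.card ≤ W.card := Finset.card_le_card hSW
        have hsupp1 : 1 ≤ (i.val).supp.ncard :=
          (Set.ncard_pos (Set.toFinite _)).mpr (supp_nonempty _)
        have hWile : Wi.card ≤ n := by omega
        have hTCi : TCond G Wi :=
          tcond_sub G hV hSW hSne hTC rfl hSq hSmax i.val i.2.1 i.2.2 (ha i) hWicoe
        obtain ⟨Mi, hM1, hM2⟩ := ih Wi hWile hWieven hTCi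
        exact ⟨Mi, hM1, by rw [hM2, hWicoe]⟩
      choose M hM hMv using hMi
      have hfi_not_supp : ∀ i j : ι, f i ∉ (j.val).supp := by
        intro i j hmem
        exact (hsuppWS j hmem).2 (Finset.mem_coe.mpr (hfS i))
      have hdisj_supp : ∀ i j : ι, i ≠ j → Disjoint (i.val).supp (j.val).supp := by
        intro i j hij
        exact pairwise_disjoint_supp_connectedComponent _ (fun h => hij (Subtype.ext h))
      set MM : ι → G.Subgraph := fun i => M i ⊔ G.subgraphOfAdj (hadj i) with hMM
      have hMMmatch : ∀ i, (MM i).IsMatching := by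
        intro i
        apply (hM i).sup (Subgraph.IsMatching.subgraphOfAdj (hadj i))
        rw [(hM i).support_eq_verts,
          (Subgraph.IsMatching.subgraphOfAdj (hadj i)).support_eq_verts,
          hMv i, subgraphOfAdj_verts]
        rw [Set.disjoint_left]
        rintro x ⟨hx1, hx2⟩ hx3
        rcases hx3 with h | h
        · exact hx2 h
        · rw [Set.mem_singleton_iff] at h
          subst h
          exact hfi_not_supp i i hx1
      have hMMverts : ∀ i, (MM i).verts = (i.val).supp ∪ {f i} := by
        intro i
        rw [hMM]
        simp only [Subgraph.verts_sup, hMv i, subgraphOfAdj_verts]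
        ext x
        constructor
        · rintro (⟨h1, _⟩ | h2)
          · exact Or.inl h1
          · rcases h2 with h | h
            · exact Or.inl (h ▸ ha i)
            · exact Or.inr h
        · rintro (h1 | h2)
          · by_cases hxa : x = a i
            · exact Or.inr (Or.inl hxa)
            · exact Or.inl ⟨h1, hxa⟩
          · exact Or.inr (Or.inr h2)
      have hpair : Pairwise fun i j => Disjoint (MM i).support (MM j).support := by
        intro i j hij
        rw [(hMMmatch i).support_eq_verts, (hMMmatch j).support_eq_verts,
          hMMverts i, hMMverts j]
        rw [Set.disjoint_left]
        rintro x (hx | hx) hy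
        · rcases hy with hy | hy
          · exact Set.disjoint_left.mp (hdisj_supp i j hij) hx hy
          · rw [Set.mem_singleton_iff] at hy
            subst hy
            exact hfi_not_supp j i hx
        · rw [Set.mem_singleton_iff] at hx
          subst hx
          rcases hy with hy | hy
          · exact hfi_not_supp i j hy
          · rw [Set.mem_singleton_iff] at hy
            exact hij (hfinj hy)
      refine ⟨⨆ i, MM i, Subgraph.IsMatching.iSup hMMmatch hpair, ?_⟩
      rw [Subgraph.verts_iSup]
      have hcover : (⋃ i : ι, (i.val).supp) = (↑W : Set V) \ ↑S := by
        apply Set.Subset.antisymm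
        · intro x hx
          obtain ⟨i, hi⟩ := Set.mem_iUnion.mp hx
          exact hsuppWS i hi
        · intro x hx
          have hxu : x ∈ (↑Wᶜ ∪ ↑S : Set V)ᶜ := by rw [hucompl]; exact hx
          have hxsupp : x ∈ ((del G (↑Wᶜ ∪ ↑S : Set V)).connectedComponentMk x).supp := by
            rw [ConnectedComponent.mem_supp_iff]
          have hcsub : ((del G (↑Wᶜ ∪ ↑S : Set V)).connectedComponentMk x).supp
              ⊆ (↑Wᶜ ∪ ↑S : Set V)ᶜ := by
            rcases comp_cases ((del G (↑Wᶜ ∪ ↑S : Set V)).connectedComponentMk x)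
              with h | ⟨v, hv, hveq⟩
            · exact h
            · exfalso
              rw [hveq, Set.mem_singleton_iff] at hxsupp
              subst hxsupp
              exact hxu hv
          exact Set.mem_iUnion.mpr
            ⟨⟨(del G (↑Wᶜ ∪ ↑S : Set V)).connectedComponentMk x,
              hodd _ hcsub, hcsub⟩, hxsupp⟩
      have hrange : (⋃ i : ι, ({f i} : Set V)) = (↑S : Set V) := by
        rw [← hfim, Finset.coe_image]
        ext y
        simp [Set.mem_iUnion, eq_comm]
      have hsplit : (⋃ i : ι, (MM i).verts) =
          (⋃ i : ι, (i.val).supp) ∪ (⋃ i : ι, ({f i} : Set V)) := by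
        simp_rw [hMMverts]
        rw [Set.iUnion_union_distrib]
      rw [hsplit, hcover, hrange, Set.diff_union_of_subset (Finset.coe_subset.mpr hSW)]


lemma mem_extNbhd {G : SimpleGraph V} [DecidableRel G.Adj] {X : Finset V} {v : V} :
    v ∈ extNbhd G X ↔ v ∉ X ∧ ∃ x ∈ X, G.Adj x v := by
  simp [extNbhd]

lemma expander_q_le (G : SimpleGraph V) [DecidableRel G.Adj] (C : ℝ) (hC : 3 ≤ C)
    (hexp : IsCExpander G C) (heven : Even (Fintype.card V)) (S : Finset V) :
    q G (↑S : Set V) ≤ S.card := by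
  classical
  by_cases hn0 : Fintype.card V = 0
  · haveI hVempty : IsEmpty V := Fintype.card_eq_zero_iff.mp hn0
    haveI : IsEmpty ((del G (↑S : Set V)).ConnectedComponent) := by
      refine ⟨fun c => ?_⟩
      obtain ⟨v, _⟩ := c.exists_rep
      exact hVempty.false v
    have hq0 : q G (↑S : Set V) = 0 := Nat.card_of_isEmpty
    omega
  have hn1 : 1 ≤ Fintype.card V := Nat.one_le_iff_ne_zero.mpr hn0
  have hC0 : (0:ℝ) < C := lt_of_lt_of_le (by norm_num) hC
  set θ : ℝ := (Fintype.card V : ℝ) / (2 * C) with hθ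
  have hθ0 : 0 < θ := by
    apply div_pos
    · exact_mod_cast hn1
    · linarith
  have hθn : 3 * θ ≤ (Fintype.card V : ℝ) / 2 := by
    rw [hθ]
    rw [show (3:ℝ) * ((Fintype.card V : ℝ)/(2*C)) =
      (3*(Fintype.card V:ℝ))/(2*C) from by ring]
    rw [div_le_div_iff₀ (by linarith) (by norm_num : (0:ℝ) < 2)]
    nlinarith [Nat.cast_nonneg (α := ℝ) (Fintype.card V)]
  set K := del G (↑S : Set V) with hK
  haveI : Fintype K.ConnectedComponent := Fintype.ofFinite _
  set Fin' : K.ConnectedComponent → Finset V :=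
    fun c => (Set.toFinite c.supp).toFinset with hFin'
  have hFinmem : ∀ (c : K.ConnectedComponent) (x : V), x ∈ Fin' c ↔ x ∈ c.supp :=
    fun c x => Set.Finite.mem_toFinset _
  have hFindisj : ∀ c c' : K.ConnectedComponent, c ≠ c' →
      Disjoint (Fin' c) (Fin' c') := by
    intro c c' hne
    rw [hFin']
    simp only
    rw [Set.Finite.disjoint_toFinset]
    exact pairwise_disjoint_supp_connectedComponent K hne
  have hFinpos : ∀ c : K.ConnectedComponent, 1 ≤ (Fin' c).card := by
    intro c
    rw [Finset.one_le_card]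
    exact ⟨crep c, (hFinmem c _).mpr (crep_mem c)⟩
  set P : K.ConnectedComponent → Prop := fun c => c.supp ⊆ (↑S : Set V)ᶜ with hP
  set 𝒮 : Finset K.ConnectedComponent :=
    Finset.univ.filter (fun c => P c ∧ ((Fin' c).card : ℝ) < θ) with h𝒮
  set ℬ : Finset K.ConnectedComponent :=
    Finset.univ.filter (fun c => P c ∧ ¬ ((Fin' c).card : ℝ) < θ) with hℬ
  have h𝒮P : ∀ c ∈ 𝒮, P c := by
    intro c hc
    rw [h𝒮, Finset.mem_filter] at hc
    exact hc.2.1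
  have h𝒮small : ∀ c ∈ 𝒮, ((Fin' c).card : ℝ) < θ := by
    intro c hc
    rw [h𝒮, Finset.mem_filter] at hc
    exact hc.2.2
  set UF : Finset K.ConnectedComponent → Finset V :=
    fun ℱ => ℱ.biUnion Fin' with hUF
  have hUFcard : ∀ ℱ : Finset K.ConnectedComponent,
      (UF ℱ).card = ∑ c ∈ ℱ, (Fin' c).card := by
    intro ℱ
    exact Finset.card_biUnion (fun x _ y _ hxy => hFindisj x y hxy)
  have hUFge : ∀ ℱ : Finset K.ConnectedComponent, ℱ.card ≤ (UF ℱ).card := by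
    intro ℱ
    rw [hUFcard]
    have h0 := Finset.card_nsmul_le_sum ℱ (fun c => (Fin' c).card) 1
      (fun c _ => hFinpos c)
    simpa using h0
  have hnoedge : ∀ c c' : K.ConnectedComponent, c ≠ c' → P c → P c' →
      ∀ x ∈ Fin' c, ∀ y ∈ Fin' c', ¬ G.Adj x y := by
    intro c c' hne hc hc' x hx y hy hadj
    rw [hFinmem] at hx hy
    have hyc : y ∈ c.supp := supp_closed c hx (del_adj.mpr ⟨hadj, hc hx, hc' hy⟩)
    exact Set.disjoint_left.mp
      (pairwise_disjoint_supp_connectedComponent K hne) hyc hy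
  have hE2 : ∀ ℱ : Finset K.ConnectedComponent, (∀ c ∈ ℱ, P c) →
      extNbhd G (UF ℱ) ⊆ S := by
    intro ℱ hℱ v hv
    obtain ⟨hvU, x, hxU, hadj⟩ := mem_extNbhd.mp hv
    obtain ⟨c, hcℱ, hxc⟩ := Finset.mem_biUnion.mp hxU
    rw [hFinmem] at hxc
    by_contra hvS
    have hvc : v ∈ c.supp := supp_closed c hxc
      (del_adj.mpr ⟨hadj, hℱ c hcℱ hxc, fun h => hvS (Finset.mem_coe.mp h)⟩)
    exact hvU (Finset.mem_biUnion.mpr ⟨c, hcℱ, (hFinmem c v).mpr hvc⟩)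
  have hE4 : ∀ A B : Finset V, Disjoint A B → (∀ x ∈ A, ∀ y ∈ B, ¬ G.Adj x y) →
      ((A.card:ℝ) < θ ∨ (B.card:ℝ) < θ) := by
    intro A B hd hno
    by_contra hcon
    push_neg at hcon
    obtain ⟨x, hx, y, hy, hxy⟩ := hexp.2 A B hd hcon.1 hcon.2
    exact hno x hx y hy hxy
  have hℬ1 : ℬ.card ≤ 1 := by
    rw [Finset.card_le_one]
    intro b hb b' hb'
    rw [hℬ, Finset.mem_filter] at hb hb'
    by_contra hne
    have hdisj := hFindisj b b' hne
    have hno : ∀ x ∈ Fin' b, ∀ y ∈ Fin' b', ¬ G.Adj x y :=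
      hnoedge b b' hne hb.2.1 hb'.2.1
    rcases hE4 _ _ hdisj hno with h | h
    · exact hb.2.2 h
    · exact hb'.2.2 h
  have hq_le : q G (↑S : Set V) ≤ 𝒮.card + ℬ.card := by
    rw [q_eq_ncard]
    have hsub : {c : K.ConnectedComponent |
        Odd (Nat.card c.supp) ∧ c.supp ⊆ (↑S : Set V)ᶜ} ⊆ ↑(𝒮 ∪ ℬ) := by
      intro c hc
      rw [Finset.coe_union, Set.mem_union]
      by_cases hsize : ((Fin' c).card : ℝ) < θ
      · left
        rw [Finset.mem_coe, h𝒮, Finset.mem_filter]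
        exact ⟨Finset.mem_univ _, hc.2, hsize⟩
      · right
        rw [Finset.mem_coe, hℬ, Finset.mem_filter]
        exact ⟨Finset.mem_univ _, hc.2, hsize⟩
    calc {c : K.ConnectedComponent |
        Odd (Nat.card c.supp) ∧ c.supp ⊆ (↑S : Set V)ᶜ}.ncard
        ≤ (↑(𝒮 ∪ ℬ) : Set K.ConnectedComponent).ncard :=
          Set.ncard_le_ncard hsub (Set.toFinite _)
      _ = (𝒮 ∪ ℬ).card := Set.ncard_coe_finset _
      _ ≤ 𝒮.card + ℬ.card := Finset.card_union_le _ _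
  by_cases hUS : ((UF 𝒮).card : ℝ) < θ
  · rcases Finset.eq_empty_or_nonempty 𝒮 with h𝒮e | h𝒮ne
    · rcases Finset.eq_empty_or_nonempty S with hSe | hSne
      · have hpar := q_parity G (↑S : Set V) heven
        rw [natCard_coe_finset] at hpar
        have hqe : Even (q G (↑S : Set V)) := hpar.mpr (by rw [hSe]; simp)
        have hq1 : q G (↑S : Set V) ≤ 1 := by
          rw [h𝒮e] at hq_le
          simpa using le_trans hq_le (by simpa using hℬ1)
        obtain ⟨k, hk⟩ := hqe
        omega
      · have hq1 : q G (↑S : Set V) ≤ 1 := by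
          rw [h𝒮e] at hq_le
          simpa using le_trans hq_le (by simpa using hℬ1)
        have hS1 := Finset.card_pos.mpr hSne
        omega
    · have hexp1 := hexp.1 (UF 𝒮) hUS
      have hcard_le := Finset.card_le_card (hE2 𝒮 h𝒮P)
      have hchain : (3:ℝ) * ((UF 𝒮).card) ≤ (S.card : ℝ) := by
        have h1 : (3:ℝ) * ((UF 𝒮).card) ≤ C * ((UF 𝒮).card) :=
          mul_le_mul_of_nonneg_right hC (Nat.cast_nonneg _)
        have h2 : ((extNbhd G (UF 𝒮)).card : ℝ) ≤ (S.card : ℝ) :=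
          Nat.cast_le.mpr hcard_le
        linarith
      have hnat : 3 * (UF 𝒮).card ≤ S.card := by exact_mod_cast hchain
      have h𝒮1 : 1 ≤ 𝒮.card := Finset.card_pos.mpr h𝒮ne
      have h𝒮U := hUFge 𝒮
      omega
  · push_neg at hUS
    have hne𝒞 : 𝒮 ∈ 𝒮.powerset.filter
        (fun F => θ ≤ ((UF F).card : ℝ)) := by
      rw [Finset.mem_filter, Finset.mem_powerset]
      exact ⟨le_refl _, hUS⟩
    obtain ⟨ℱ, hℱmem, hℱmin⟩ := Finset.exists_min_image _
      (fun F => F.card) ⟨𝒮, hne𝒞⟩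
    rw [Finset.mem_filter, Finset.mem_powerset] at hℱmem
    obtain ⟨hℱ𝒮, hℱbig⟩ := hℱmem
    have hℱP : ∀ c ∈ ℱ, P c := fun c hc => h𝒮P c (hℱ𝒮 hc)
    have hℱsmall : ∀ c ∈ ℱ, ((Fin' c).card : ℝ) < θ :=
      fun c hc => h𝒮small c (hℱ𝒮 hc)
    have hℱne : ℱ.Nonempty := by
      rcases Finset.eq_empty_or_nonempty ℱ with he | h
      · exfalso
        rw [he] at hℱbig
        simp only [hUF, Finset.biUnion_empty, Finset.card_empty, Nat.cast_zero] at hℱbig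
        linarith
      · exact h
    obtain ⟨c₀, hc₀⟩ := hℱne
    have herase : ((UF (ℱ.erase c₀)).card : ℝ) < θ := by
      by_contra hcon
      push_neg at hcon
      have hmem : ℱ.erase c₀ ∈ 𝒮.powerset.filter
          (fun F => θ ≤ ((UF F).card : ℝ)) := by
        rw [Finset.mem_filter, Finset.mem_powerset]
        exact ⟨(Finset.erase_subset _ _).trans hℱ𝒮, hcon⟩
      have h1 := hℱmin _ hmem
      have h2 : (ℱ.erase c₀).card < ℱ.card := Finset.card_erase_lt_of_mem hc₀
      omega
    have hUFsplit : UF ℱ = Fin' c₀ ∪ UF (ℱ.erase c₀) := by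
      rw [hUF]
      simp only
      conv_lhs => rw [← Finset.insert_erase hc₀]
      exact Finset.biUnion_insert
    have hUFlt : ((UF ℱ).card : ℝ) < 2 * θ := by
      have h1 : (UF ℱ).card ≤ (Fin' c₀).card + (UF (ℱ.erase c₀)).card := by
        rw [hUFsplit]
        exact Finset.card_union_le _ _
      have h2 := hℱsmall c₀ hc₀
      have h3 : ((UF ℱ).card : ℝ) ≤ ((Fin' c₀).card : ℝ) +
          ((UF (ℱ.erase c₀)).card : ℝ) := by exact_mod_cast h1
      linarith
    have hdisjF : ∀ (ℱ₁ ℱ₂ : Finset K.ConnectedComponent), Disjoint ℱ₁ ℱ₂ →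
        Disjoint (UF ℱ₁) (UF ℱ₂) := by
      intro ℱ₁ ℱ₂ hd
      rw [Finset.disjoint_left]
      intro x hx hx'
      obtain ⟨c, hc, hxc⟩ := Finset.mem_biUnion.mp hx
      obtain ⟨c', hc', hxc'⟩ := Finset.mem_biUnion.mp hx'
      have hne : c ≠ c' := fun h => Finset.disjoint_left.mp hd hc (h ▸ hc')
      exact Finset.disjoint_left.mp (hFindisj c c' hne) hxc hxc'
    have hnoedgeF : ∀ (ℱ₁ ℱ₂ : Finset K.ConnectedComponent), Disjoint ℱ₁ ℱ₂ →
        (∀ c ∈ ℱ₁, P c) → (∀ c ∈ ℱ₂, P c) →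
        ∀ x ∈ UF ℱ₁, ∀ y ∈ UF ℱ₂, ¬ G.Adj x y := by
      intro ℱ₁ ℱ₂ hd h1 h2 x hx y hy
      obtain ⟨c, hc, hxc⟩ := Finset.mem_biUnion.mp hx
      obtain ⟨c', hc', hyc⟩ := Finset.mem_biUnion.mp hy
      have hne : c ≠ c' := fun h => Finset.disjoint_left.mp hd hc (h ▸ hc')
      exact hnoedge c c' hne (h1 c hc) (h2 c' hc') x hxc y hyc
    have hrest : ((UF (𝒮 \ ℱ)).card : ℝ) < θ := by
      have hd : Disjoint ℱ (𝒮 \ ℱ) := Finset.disjoint_sdiff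
      rcases hE4 (UF ℱ) (UF (𝒮 \ ℱ)) (hdisjF _ _ hd)
        (hnoedgeF _ _ hd hℱP (fun c hc => h𝒮P c (Finset.mem_sdiff.mp hc).1))
        with h | h
      · linarith
      · exact h
    have hℬe : ℬ = ∅ := by
      rcases Finset.eq_empty_or_nonempty ℬ with h | ⟨b, hb⟩
      · exact h
      exfalso
      rw [hℬ, Finset.mem_filter] at hb
      have hbℱ : b ∉ ℱ := fun h => hb.2.2 (hℱsmall b h)
      have hd : Disjoint ℱ {b} := Finset.disjoint_singleton_right.mpr hbℱ
      have hUFb : UF {b} = Fin' b := by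
        rw [hUF]; simp
      have hPb : ∀ c ∈ ({b} : Finset K.ConnectedComponent), P c := by
        intro c hc
        rw [Finset.mem_singleton] at hc
        subst hc
        exact hb.2.1
      rcases hE4 (UF ℱ) (UF {b}) (hdisjF _ _ hd)
        (hnoedgeF _ _ hd hℱP hPb) with h | h
      · linarith
      · rw [hUFb] at h
        exact hb.2.2 h
    have hcover : ∀ v : V, v ∉ S → v ∈ UF 𝒮 := by
      intro v hvS
      have hvsupp : v ∈ (K.connectedComponentMk v).supp := by
        rw [ConnectedComponent.mem_supp_iff]
      have hPc : P (K.connectedComponentMk v) := by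
        rcases comp_cases (K.connectedComponentMk v) with h | ⟨w, hw, hveq⟩
        · exact h
        · exfalso
          rw [hveq, Set.mem_singleton_iff] at hvsupp
          exact hvS (Finset.mem_coe.mp (hvsupp ▸ hw))
      have hsmallc : ((Fin' (K.connectedComponentMk v)).card : ℝ) < θ := by
        by_contra h
        have hmem : K.connectedComponentMk v ∈ ℬ := by
          rw [hℬ, Finset.mem_filter]
          exact ⟨Finset.mem_univ _, hPc, h⟩
        rw [hℬe] at hmem
        simp at hmem
      refine Finset.mem_biUnion.mpr ⟨K.connectedComponentMk v, ?_,
        (hFinmem _ _).mpr hvsupp⟩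
      rw [h𝒮, Finset.mem_filter]
      exact ⟨Finset.mem_univ _, hPc, hsmallc⟩
    have hcompl_le : Fintype.card V - S.card ≤ (UF 𝒮).card := by
      have h0 : Sᶜ ⊆ UF 𝒮 := fun v hv => hcover v (Finset.mem_compl.mp hv)
      have h1 := Finset.card_le_card h0
      rwa [Finset.card_compl] at h1
    have hUS_le : ((UF 𝒮).card : ℝ) < 3 * θ := by
      have hsplit : UF 𝒮 ⊆ UF ℱ ∪ UF (𝒮 \ ℱ) := by
        intro x hx
        obtain ⟨c, hc, hxc⟩ := Finset.mem_biUnion.mp hx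
        by_cases hcℱ : c ∈ ℱ
        · exact Finset.mem_union_left _ (Finset.mem_biUnion.mpr ⟨c, hcℱ, hxc⟩)
        · exact Finset.mem_union_right _ (Finset.mem_biUnion.mpr
            ⟨c, Finset.mem_sdiff.mpr ⟨hc, hcℱ⟩, hxc⟩)
      have h1 : (UF 𝒮).card ≤ (UF ℱ).card + (UF (𝒮 \ ℱ)).card :=
        le_trans (Finset.card_le_card hsplit) (Finset.card_union_le _ _)
      have h2 : ((UF 𝒮).card:ℝ) ≤ ((UF ℱ).card:ℝ) + ((UF (𝒮 \ ℱ)).card:ℝ) := by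
        exact_mod_cast h1
      linarith
    have h𝒮U := hUFge 𝒮
    have hq2 : q G (↑S : Set V) ≤ 𝒮.card := by
      rw [hℬe] at hq_le
      simpa using hq_le
    have hUhalf : ((UF 𝒮).card : ℝ) < (Fintype.card V : ℝ)/2 :=
      lt_of_lt_of_le hUS_le hθn
    have hScard_le : S.card ≤ Fintype.card V := Finset.card_le_univ S
    have hnS : (Fintype.card V : ℝ) - S.card ≤ ((UF 𝒮).card:ℝ) := by
      have h0 : ((Fintype.card V - S.card : ℕ) : ℝ) ≤ ((UF 𝒮).card:ℝ) :=
        Nat.cast_le.mpr hcompl_le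
      rw [Nat.cast_sub hScard_le] at h0
      exact h0
    have hfin : ((UF 𝒮).card : ℝ) < (S.card : ℝ) := by linarith
    have hfin' : (UF 𝒮).card < S.card := by exact_mod_cast hfin
    omega

lemma expander_tcond (G : SimpleGraph V) [DecidableRel G.Adj] (C : ℝ) (hC : 3 ≤ C)
    (hexp : IsCExpander G C) (heven : Even (Fintype.card V)) :
    TCond G Finset.univ := by
  intro S hS
  have h0 : (↑(Finset.univ : Finset V)ᶜ ∪ ↑S : Set V) = (↑S : Set V) := by simp
  rw [h0]
  exact expander_q_le G C hC hexp heven S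

end PMaux

/-- If `G` is a `C`-expander for some `C ≥ 3` on an even number of vertices,
then `G` contains a perfect matching. -/
theorem stmt_0 {V : Type*} [Fintype V] [DecidableEq V] (G : SimpleGraph V)
    [DecidableRel G.Adj] (C : ℝ) (hC : 3 ≤ C) (hexp : IsCExpander G C)
    (heven : Even (Fintype.card V)) :
    ∃ M : G.Subgraph, M.IsPerfectMatching := by
  classical
  obtain ⟨M, hM, hMv⟩ := PMaux.key G heven (Fintype.card V) Finset.univ
    (le_of_eq Finset.card_univ) (by rw [Finset.card_univ]; exact heven)
    (PMaux.expander_tcond G C hC hexp heven)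
  refine ⟨M, hM, fun v => ?_⟩
  rw [hMv, Finset.coe_univ]
  trivial
end

section
/- Let G be a C-expander with C ≥ 3, let S ⊆ V(G) be nonempty, and let A₁,...,Aₘ be the connected components of G − S. Then m ≤ |S|. In particular, Tutte's condition holds for G. -/
/-- If `G` is a `C`-expander with `C ≥ 3` and `S` is a nonempty vertex set, then
the number of connected components of `G − S` is at most `|S|`
(in particular, Tutte's condition holds for `G`). -/
theorem stmt_2 {V : Type*} [Fintype V] [DecidableEq V] (G : SimpleGraph V)
    [DecidableRel G.Adj] (C : ℝ) (hC : 3 ≤ C) (hexp : IsCExpander G C)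
    (S : Finset V) (hS : S.Nonempty) :
    Nat.card (SimpleGraph.induce ((↑S : Set V)ᶜ) G).ConnectedComponent ≤ S.card := by
  classical
  set T : Set V := (↑S : Set V)ᶜ with hT
  set G' : SimpleGraph T := SimpleGraph.induce T G with hG'
  haveI : Fintype G'.ConnectedComponent := Fintype.ofFinite _
  rw [Nat.card_eq_fintype_card]
  -- basic positivity facts
  have hCpos : (0:ℝ) < C := by linarith
  have hScard : 1 ≤ S.card := Finset.card_pos.2 hS
  have hnpos : 0 < Fintype.card V := by
    obtain ⟨s, hs⟩ := hS
    exact Fintype.card_pos_iff.2 ⟨s⟩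
  set θ : ℝ := (Fintype.card V : ℝ) / (2 * C) with hθ
  have hθpos : 0 < θ := by
    apply div_pos
    · exact_mod_cast hnpos
    · linarith
  -- the vertex set of each component, as a finset of V
  set F : G'.ConnectedComponent → Finset V :=
    fun c => Finset.univ.filter fun v => ∃ h : v ∈ T, G'.connectedComponentMk ⟨v, h⟩ = c
    with hF
  have hmemF : ∀ c v, v ∈ F c ↔ ∃ h : v ∈ T, G'.connectedComponentMk ⟨v, h⟩ = c := by
    intro c v; simp [hF]
  have hFne : ∀ c, ∃ v, v ∈ F c := by
    intro c
    induction c using SimpleGraph.ConnectedComponent.ind with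
    | _ v => exact ⟨v.1, (hmemF _ _).2 ⟨v.2, rfl⟩⟩
  have hFdisj : ∀ c c', c ≠ c' → Disjoint (F c) (F c') := by
    intro c c' h
    rw [Finset.disjoint_left]
    intro v hv hv'
    obtain ⟨h1, h2⟩ := (hmemF c v).1 hv
    obtain ⟨h1', h2'⟩ := (hmemF c' v).1 hv'
    exact h (h2.symm.trans h2')
  have hFnotS : ∀ c v, v ∈ F c → v ∉ S := by
    intro c v hv
    obtain ⟨h1, -⟩ := (hmemF c v).1 hv
    simpa [hT] using h1
  -- adjacency closure of components
  have hadjF : ∀ c v w, v ∈ F c → w ∉ S → G.Adj v w → w ∈ F c := by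
    intro c v w hv hw hvw
    obtain ⟨h1, h2⟩ := (hmemF c v).1 hv
    have hwT : w ∈ T := by simpa [hT] using hw
    refine (hmemF c w).2 ⟨hwT, ?_⟩
    rw [← h2]
    apply SimpleGraph.ConnectedComponent.sound
    apply SimpleGraph.Adj.reachable
    show G'.Adj ⟨w, hwT⟩ ⟨v, h1⟩
    exact hvw.symm
  -- cardinality of unions of components
  have hUcard : ∀ W : Finset G'.ConnectedComponent, W.card ≤ (W.biUnion F).card := by
    intro W
    rw [Finset.card_biUnion (fun x _ y _ h => hFdisj x y h)]
    calc W.card = ∑ _c ∈ W, 1 := by simp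
    _ ≤ ∑ c ∈ W, (F c).card := by
        refine Finset.sum_le_sum fun c _ => ?_
        obtain ⟨v, hv⟩ := hFne c
        exact Finset.card_pos.2 ⟨v, hv⟩
  -- external neighborhoods of unions of components lie in S
  have hext : ∀ W : Finset G'.ConnectedComponent, extNbhd G (W.biUnion F) ⊆ S := by
    intro W u hu
    rw [extNbhd, Finset.mem_filter] at hu
    obtain ⟨-, hnot, x, hx, hadjxu⟩ := hu
    by_contra huS
    obtain ⟨c, hc, hxc⟩ := Finset.mem_biUnion.1 hx
    exact hnot (Finset.mem_biUnion.2 ⟨c, hc, hadjF c x u hxc huS hadjxu⟩)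
  -- small unions force S to be large
  have claim1 : ∀ W : Finset G'.ConnectedComponent,
      ((W.biUnion F).card : ℝ) < θ → 3 * W.card ≤ S.card := by
    intro W hW
    have h1 := hexp.1 _ hW
    have h2 : ((extNbhd G (W.biUnion F)).card : ℝ) ≤ S.card := by
      exact_mod_cast Finset.card_le_card (hext W)
    have h4 : (W.card : ℝ) ≤ (W.biUnion F).card := by exact_mod_cast hUcard W
    have h3 : (3:ℝ) * W.card ≤ S.card := by nlinarith [Nat.cast_nonneg (α := ℝ) W.card]
    exact_mod_cast h3
  -- no edges between unions of disjoint families of components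
  have hnocross : ∀ (W W' : Finset G'.ConnectedComponent), Disjoint W W' →
      ∀ a ∈ W.biUnion F, ∀ b ∈ W'.biUnion F, ¬ G.Adj a b := by
    intro W W' hWW' a ha b hb hab
    obtain ⟨c, hc, hac⟩ := Finset.mem_biUnion.1 ha
    obtain ⟨c', hc', hbc'⟩ := Finset.mem_biUnion.1 hb
    have hbS : b ∉ S := hFnotS c' b hbc'
    have hbc : b ∈ F c := hadjF c a b hac hbS hab
    have hcc' : c = c' := by
      by_contra h
      exact Finset.disjoint_left.1 (hFdisj c c' h) hbc hbc'
    exact Finset.disjoint_left.1 hWW' hc (hcc' ▸ hc')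
  have hUdisj : ∀ (W W' : Finset G'.ConnectedComponent), Disjoint W W' →
      Disjoint (W.biUnion F) (W'.biUnion F) := by
    intro W W' hWW'
    rw [Finset.disjoint_left]
    intro v hv hv'
    obtain ⟨c, hc, hvc⟩ := Finset.mem_biUnion.1 hv
    obtain ⟨c', hc', hvc'⟩ := Finset.mem_biUnion.1 hv'
    have : c ≠ c' := fun h => Finset.disjoint_left.1 hWW' hc (h ▸ hc')
    exact Finset.disjoint_left.1 (hFdisj c c' this) hvc hvc'
  -- choose a maximal family with small union
  set P : Finset (Finset G'.ConnectedComponent) :=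
    Finset.univ.filter (fun W => ((W.biUnion F).card : ℝ) < θ) with hP
  have hPne : P.Nonempty := ⟨∅, by simp [hP, hθpos]⟩
  obtain ⟨W, hWP, hWmax⟩ := P.exists_max_image Finset.card hPne
  have hWsmall : ((W.biUnion F).card : ℝ) < θ := by
    simpa [hP] using hWP
  have h3a : 3 * W.card ≤ S.card := claim1 W hWsmall
  have hsplit : W.card + Wᶜ.card = Fintype.card G'.ConnectedComponent :=
    Finset.card_add_card_compl W
  by_cases hb : (Wᶜ : Finset G'.ConnectedComponent) = ∅
  · rw [hb, Finset.card_empty] at hsplit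
    omega
  · obtain ⟨c, hc⟩ := Finset.nonempty_of_ne_empty hb
    have hcW : c ∉ W := Finset.mem_compl.1 hc
    -- maximality: adding c makes the union large
    have hbig : θ ≤ (((insert c W).biUnion F).card : ℝ) := by
      by_contra h
      push_neg at h
      have hmem : insert c W ∈ P := Finset.mem_filter.2 ⟨Finset.mem_univ _, h⟩
      have := hWmax _ hmem
      rw [Finset.card_insert_of_notMem hcW] at this
      omega
    -- the rest must have small union
    have hrest : (((Wᶜ \ {c}).biUnion F).card : ℝ) < θ := by
      by_contra h
      push_neg at h
      have hdisj : Disjoint (insert c W) (Wᶜ \ {c}) := by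
        rw [Finset.disjoint_left]
        intro x hx hx'
        rcases Finset.mem_insert.1 hx with h1 | h1
        · exact (Finset.mem_sdiff.1 hx').2 (by simp [h1])
        · exact Finset.mem_compl.1 (Finset.mem_sdiff.1 hx').1 h1
      obtain ⟨a, ha, b, hbm, hab⟩ := hexp.2 _ _ (hUdisj _ _ hdisj) hbig h
      exact hnocross _ _ hdisj a ha b hbm hab
    have h3b : 3 * (Wᶜ \ {c}).card ≤ S.card := claim1 _ hrest
    have hcd : (Wᶜ \ {c}).card = Wᶜ.card - 1 := by
      rw [Finset.sdiff_singleton_eq_erase, Finset.card_erase_of_mem hc]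
    have hcpos : 1 ≤ Wᶜ.card := Finset.card_pos.2 ⟨c, hc⟩
    omega
end

section
/- Let G be a C-expander with C ≥ 3 and let A₁,...,Aₘ be disjoint nonempty vertex sets with N_G(A_i) ∩ A_j = ∅ for all i ≠ j (i.e., no edges between distinct A_i's), each of size less than n/(2C). If F₀ is a union of some of the A_i of maximal total size subject to |F₀| < n/(2C), and F₁ is chosen analogously among the remaining sets, then at most one set A_i is contained in neither F₀ nor F₁. -/
/-- Let `G` be a `C`-expander with `C ≥ 3` and let `A₁,…,Aₘ` be disjoint nonempty
pairwise non-adjacent vertex sets, each of size less than `n/(2C)`. If `F₀` (indexed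
by `I₀`) is a union of some of the `Aᵢ` of maximal total size subject to being of
size `< n/(2C)`, and `F₁` (indexed by `I₁`) is chosen analogously among the remaining
sets, then at most one set `Aᵢ` is contained in neither `F₀` nor `F₁`. -/
theorem stmt_3 {V : Type*} [Fintype V] [DecidableEq V] (G : SimpleGraph V)
    [DecidableRel G.Adj] (C : ℝ) (hC : 3 ≤ C) (hexp : IsCExpander G C)
    (m : ℕ) (A : Fin m → Finset V)
    (hne : ∀ i, (A i).Nonempty)
    (hdisj : ∀ i j, i ≠ j → Disjoint (A i) (A j))
    (hnoedge : ∀ i j, i ≠ j → ∀ a ∈ A i, ∀ b ∈ A j, ¬ G.Adj a b)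
    (hsize : ∀ i, ((A i).card : ℝ) < (Fintype.card V : ℝ) / (2 * C))
    (I₀ I₁ : Finset (Fin m)) (hI : Disjoint I₀ I₁)
    (h0 : ((∑ i ∈ I₀, (A i).card : ℕ) : ℝ) < (Fintype.card V : ℝ) / (2 * C))
    (h0max : ∀ j ∉ I₀,
      (Fintype.card V : ℝ) / (2 * C) ≤ ((∑ i ∈ I₀, (A i).card : ℕ) : ℝ) + (A j).card)
    (h1 : ((∑ i ∈ I₁, (A i).card : ℕ) : ℝ) < (Fintype.card V : ℝ) / (2 * C))
    (h1max : ∀ j, j ∉ I₀ ∪ I₁ →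
      (Fintype.card V : ℝ) / (2 * C) ≤ ((∑ i ∈ I₁, (A i).card : ℕ) : ℝ) + (A j).card) :
    ((Finset.univ : Finset (Fin m)) \ (I₀ ∪ I₁)).card ≤ 1 := by
  by_contra hcard
  push_neg at hcard
  obtain ⟨j, hj, k, hk, hjk⟩ := Finset.one_lt_card.mp hcard
  simp only [Finset.mem_sdiff, Finset.mem_univ, Finset.mem_union, true_and, not_or] at hj hk
  have hJdisj : Disjoint (insert j I₀) (insert k I₁) := by
    rw [Finset.disjoint_left]
    intro i hi hi'
    rcases Finset.mem_insert.mp hi with rfl | hi <;>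
      rcases Finset.mem_insert.mp hi' with rfl | hi'
    · exact hjk rfl
    · exact hj.2 hi'
    · exact hk.1 hi
    · exact Finset.disjoint_left.mp hI hi hi'
  set B₀ := (insert j I₀).biUnion A with hB0
  set B₁ := (insert k I₁).biUnion A with hB1
  have hBdisj : Disjoint B₀ B₁ := by
    rw [Finset.disjoint_left]
    intro a ha ha'
    obtain ⟨i, hi, hai⟩ := Finset.mem_biUnion.mp ha
    obtain ⟨i', hi', hai'⟩ := Finset.mem_biUnion.mp ha'
    have : i ≠ i' := fun h => Finset.disjoint_left.mp hJdisj hi (h ▸ hi')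
    exact Finset.disjoint_left.mp (hdisj i i' this) hai hai'
  have hc0 : (Fintype.card V : ℝ) / (2 * C) ≤ B₀.card := by
    have hcard0 : B₀.card = ∑ i ∈ insert j I₀, (A i).card :=
      Finset.card_biUnion (fun x _ y _ hxy => hdisj x y hxy)
    rw [hcard0, Finset.sum_insert hj.1]
    have := h0max j hj.1
    push_cast at this ⊢
    linarith
  have hc1 : (Fintype.card V : ℝ) / (2 * C) ≤ B₁.card := by
    have hcard1 : B₁.card = ∑ i ∈ insert k I₁, (A i).card :=
      Finset.card_biUnion (fun x _ y _ hxy => hdisj x y hxy)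
    rw [hcard1, Finset.sum_insert hk.2]
    have := h1max k (by simp [hk.1, hk.2])
    push_cast at this ⊢
    linarith
  obtain ⟨a, ha, b, hb, hab⟩ := hexp.2 B₀ B₁ hBdisj hc0 hc1
  obtain ⟨i, hi, hai⟩ := Finset.mem_biUnion.mp ha
  obtain ⟨i', hi', hbi'⟩ := Finset.mem_biUnion.mp hb
  have hne' : i ≠ i' := fun h => Finset.disjoint_left.mp hJdisj hi (h ▸ hi')
  exact hnoedge i i' hne' a hai b hbi' hab
end

section
/- Let G be a (q,β)-bijumbled graph on n vertices, η ∈ (0,1], and suppose β ≤ εq²n with ε sufficiently small relative to η, and q ≫ n^{-2/3}. Then there exists a (C₁/(q³n²))-spread probability distribution on the set of matchings in the K₃-hypergraph of G that cover at least (1−η)n vertices, where C₁ = C₁(η) = 18/η³. -/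
/-- `epairs G X Y` is the number of ordered pairs `(u,v) ∈ X × Y` with `uv` an edge
of `G` (so edges inside `X ∩ Y` are counted twice). -/
def epairs {V : Type*} [Fintype V] [DecidableEq V] (G : SimpleGraph V)
    [DecidableRel G.Adj] (X Y : Finset V) : ℕ :=
  ((X ×ˢ Y).filter (fun p => G.Adj p.1 p.2)).card

/-- A graph `G` is `(q,β)`-bijumbled if for all vertex subsets `X, Y`,
`|e(X,Y) − q|X||Y|| ≤ β√(|X||Y|)`, where `e(X,Y)` counts ordered pairs. -/
def IsBijumbled {V : Type*} [Fintype V] [DecidableEq V] (G : SimpleGraph V)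
    [DecidableRel G.Adj] (q β : ℝ) : Prop :=
  ∀ X Y : Finset V,
    |(epairs G X Y : ℝ) - q * X.card * Y.card| ≤ β * Real.sqrt (X.card * Y.card)

open Finset


lemma my_card_filter_product {α β : Type*} [DecidableEq α] (s : Finset α) (t : Finset β)
    (P : α → β → Prop) [∀ a b, Decidable (P a b)] :
    ((s ×ˢ t).filter fun p => P p.1 p.2).card = ∑ a ∈ s, (t.filter (P a)).card := by
  rw [card_eq_sum_card_fiberwise (f := Prod.fst) (t := s)
    (fun p hp => (mem_product.1 (mem_filter.1 hp).1).1)]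
  refine sum_congr rfl fun a ha => ?_
  refine card_bij' (fun p _ => p.2) (fun b _ => (a, b)) ?_ ?_ ?_ ?_
  · rintro ⟨x, y⟩ hp
    simp only [mem_filter, mem_product] at hp ⊢
    obtain ⟨⟨⟨_, hy⟩, hP⟩, h1⟩ := hp
    subst h1
    exact ⟨hy, hP⟩
  · intro b hb
    simp only [mem_filter, mem_product] at hb ⊢
    exact ⟨⟨⟨ha, hb.1⟩, hb.2⟩, trivial⟩
  · rintro ⟨x, y⟩ hp
    simp only [mem_filter] at hp
    simp [← hp.2]
  · intro b hb; rfl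

section
variable {V : Type} [Fintype V] [DecidableEq V] (G : SimpleGraph V) [DecidableRel G.Adj]

lemma tord_eq (W : Finset V) :
    ((W ×ˢ (W ×ˢ W)).filter fun p =>
        G.Adj p.1 p.2.1 ∧ G.Adj p.1 p.2.2 ∧ G.Adj p.2.1 p.2.2).card
    = ∑ u ∈ W, epairs G (W.filter (G.Adj u)) (W.filter (G.Adj u)) := by
  rw [my_card_filter_product W (W ×ˢ W)
    (fun u z => G.Adj u z.1 ∧ G.Adj u z.2 ∧ G.Adj z.1 z.2)]
  refine sum_congr rfl fun u hu => ?_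
  unfold epairs
  congr 1
  ext ⟨v, w⟩
  simp only [mem_filter, mem_product]
  tauto

lemma tord_le (W : Finset V) :
    ((W ×ˢ (W ×ˢ W)).filter fun p =>
        G.Adj p.1 p.2.1 ∧ G.Adj p.1 p.2.2 ∧ G.Adj p.2.1 p.2.2).card
    ≤ 9 * ((G.cliqueFinset 3).filter (· ⊆ W)).card := by
  classical
  set s := (W ×ˢ (W ×ˢ W)).filter fun p =>
        G.Adj p.1 p.2.1 ∧ G.Adj p.1 p.2.2 ∧ G.Adj p.2.1 p.2.2 with hs
  have hmaps : ∀ p ∈ s, ({p.1, p.2.1, p.2.2} : Finset V) ∈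
      (G.cliqueFinset 3).filter (· ⊆ W) := by
    rintro ⟨x, y, z⟩ hp
    simp only [hs, mem_filter, mem_product] at hp
    obtain ⟨⟨hx, hy, hz⟩, h1, h2, h3⟩ := hp
    simp only [mem_filter, SimpleGraph.mem_cliqueFinset_iff]
    refine ⟨SimpleGraph.is3Clique_triple_iff.2 ⟨h1, h2, h3⟩, ?_⟩
    intro a ha
    simp only [mem_insert, mem_singleton] at ha
    rcases ha with rfl | rfl | rfl <;> assumption
  refine card_le_mul_card_image_of_maps_to hmaps 9 ?_
  intro T hT
  have : #{a ∈ s | (fun p : V × V × V => ({p.1, p.2.1, p.2.2} : Finset V)) a = T}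
      ≤ #(T ×ˢ T) := by
    refine card_le_card_of_injOn (fun p => (p.1, p.2.1)) ?_ ?_
    · rintro ⟨x, y, z⟩ hp
      simp only [coe_filter, Set.mem_setOf_eq] at hp
      have hx : x ∈ T := by rw [← hp.2]; simp
      have hy : y ∈ T := by rw [← hp.2]; simp
      exact mem_product.2 ⟨hx, hy⟩
    · rintro ⟨x, y, z⟩ hp ⟨x', y', z'⟩ hp' heq
      simp only [coe_filter, Set.mem_setOf_eq, hs, mem_filter, mem_product] at hp hp'
      simp only [Prod.mk.injEq] at heq
      obtain ⟨rfl, rfl⟩ := heq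
      obtain ⟨⟨-, h1, h2, h3⟩, hT1⟩ := hp
      obtain ⟨⟨-, h1', h2', h3'⟩, hT2⟩ := hp'
      have hz : z ∈ ({x, y, z'} : Finset V) := by rw [hT2, ← hT1]; simp
      simp only [mem_insert, mem_singleton] at hz
      rcases hz with rfl | rfl | rfl
      · exact absurd rfl h2.ne'   -- z = x contradicts Adj x z? h2 : Adj x z
      · exact absurd rfl h3.ne'
      · rfl
  calc #{a ∈ s | _ = T} ≤ #(T ×ˢ T) := this
    _ ≤ 9 := by
        rw [card_product]
        have h3 : T.card = 3 :=
          (SimpleGraph.mem_cliqueFinset_iff.1 (mem_filter.1 hT).1).card_eq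
        rw [h3]
end

section
variable {V : Type} [Fintype V] [DecidableEq V] (G : SimpleGraph V) [DecidableRel G.Adj]

lemma tri_lower {q β : ℝ} (hq : 0 < q) (hq1 : q ≤ 1) (hβ0 : 0 ≤ β)
    (hbij : IsBijumbled G q β) (W : Finset V)
    (hβ : β ≤ q ^ 2 * W.card / 100) :
    q ^ 3 * (W.card : ℝ) ^ 3 / 11 ≤ (((G.cliqueFinset 3).filter (· ⊆ W)).card : ℝ) := by
  rcases W.eq_empty_or_nonempty with rfl | hWne
  · simp
  have hw : (0:ℝ) < W.card := by exact_mod_cast card_pos.2 hWne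
  set w := (W.card : ℝ) with hwdef
  set d : V → ℕ := fun u => (W.filter (G.Adj u)).card with hd
  have hE : (epairs G W W : ℝ) = ∑ u ∈ W, (d u : ℝ) := by
    have : epairs G W W = ∑ u ∈ W, (W.filter (G.Adj u)).card :=
      my_card_filter_product W W G.Adj
    rw [this]; push_cast; rfl
  set E := ∑ u ∈ W, (d u : ℝ) with hEdef
  have hbWW := hbij W W
  rw [Real.sqrt_mul_self hw.le, hE, ← hwdef] at hbWW
  have hEb := abs_le.1 hbWW
  -- per-vertex bound
  have hu : ∀ u ∈ W, q * (d u : ℝ) ^ 2 - β * d u ≤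
      (epairs G (W.filter (G.Adj u)) (W.filter (G.Adj u)) : ℝ) := by
    intro u _
    have h := hbij (W.filter (G.Adj u)) (W.filter (G.Adj u))
    have hdn : (0:ℝ) ≤ (d u : ℝ) := Nat.cast_nonneg _
    rw [Real.sqrt_mul_self hdn] at h
    have h' := (abs_le.1 h).1
    nlinarith [h']
  have hsum : q * (∑ u ∈ W, (d u : ℝ) ^ 2) - β * E ≤
      (∑ u ∈ W, (epairs G (W.filter (G.Adj u)) (W.filter (G.Adj u)) : ℝ)) := by
    have := Finset.sum_le_sum hu
    calc q * (∑ u ∈ W, (d u : ℝ) ^ 2) - β * E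
        = ∑ u ∈ W, (q * (d u : ℝ) ^ 2 - β * d u) := by
          rw [Finset.sum_sub_distrib, Finset.mul_sum, Finset.mul_sum]
      _ ≤ _ := this
  have hCS : E ^ 2 ≤ w * ∑ u ∈ W, (d u : ℝ) ^ 2 := by
    rw [hEdef, hwdef]
    exact_mod_cast sq_sum_le_card_mul_sum_sq (s := W) (f := fun u => (d u : ℝ))
  set N := (((G.cliqueFinset 3).filter (· ⊆ W)).card : ℝ) with hN
  have h9 : (∑ u ∈ W, (epairs G (W.filter (G.Adj u)) (W.filter (G.Adj u)) : ℝ)) ≤ 9 * N := by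
    have h1 := tord_le G W
    have h2 := tord_eq G W
    rw [h2] at h1
    have : ((∑ u ∈ W, epairs G (W.filter (G.Adj u)) (W.filter (G.Adj u)) : ℕ) : ℝ)
        ≤ ((9 * ((G.cliqueFinset 3).filter (· ⊆ W)).card : ℕ) : ℝ) := Nat.cast_le.2 h1
    push_cast at this
    convert this using 2 <;> simp
  -- now pure arithmetic
  clear_value w d E N
  have hβ' : β ≤ q ^ 2 * w / 100 := hβ
  have hElo : (99/100) * q * w ^ 2 ≤ E := by nlinarith [hEb.1]
  have hEhi : E ≤ (101/100) * q * w ^ 2 := by nlinarith [hEb.2]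
  have hE0 : 0 ≤ E := by nlinarith
  have key : q * E ^ 2 - β * E * w ≤ 9 * N * w := by
    have h1 : q * E ^ 2 ≤ q * (w * ∑ u ∈ W, (d u : ℝ) ^ 2) :=
      mul_le_mul_of_nonneg_left hCS hq.le
    nlinarith [hsum, h9]
  have main : (9:ℝ)/11 * (q ^ 3 * w ^ 4) ≤ q * E ^ 2 - β * E * w := by
    have h1 : q * ((99/100) * q * w ^ 2) ^ 2 ≤ q * E ^ 2 := by
      have := pow_le_pow_left₀ (by positivity) hElo 2
      exact mul_le_mul_of_nonneg_left this hq.le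
    have h2 : β * E * w ≤ (q ^ 2 * w / 100) * ((101/100) * q * w ^ 2) * w := by
      have hBE : β * E ≤ (q ^ 2 * w / 100) * ((101/100) * q * w ^ 2) :=
        mul_le_mul hβ' hEhi hE0 (by positivity)
      exact mul_le_mul_of_nonneg_right hBE hw.le
    have hX : (0:ℝ) < q ^ 3 * w ^ 4 := by positivity
    linarith [h1, h2, hX]
  have h : (9:ℝ)/11 * (q ^ 3 * w ^ 4) ≤ 9 * N * w := le_trans main key
  have h' : q ^ 3 * w ^ 3 * w ≤ (11 * N) * w := by nlinarith [h]
  have h'' : q ^ 3 * w ^ 3 ≤ 11 * N := le_of_mul_le_mul_right h' hw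
  linarith
end

variable {V : Type} [Fintype V] [DecidableEq V]

def matchFam (G : SimpleGraph V) [DecidableRel G.Adj] (k : ℕ) : Finset (Finset (Finset V)) :=
  univ.filter (fun M => M.card = k ∧ (∀ T ∈ M, T ∈ G.cliqueFinset 3) ∧
    ∀ a ∈ M, ∀ b ∈ M, a ≠ b → Disjoint a b)

variable (G : SimpleGraph V) [DecidableRel G.Adj]

lemma mem_matchFam_iff {k : ℕ} {M : Finset (Finset V)} :
    M ∈ matchFam G k ↔ M.card = k ∧ (∀ T ∈ M, T ∈ G.cliqueFinset 3) ∧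
      ∀ a ∈ M, ∀ b ∈ M, a ≠ b → Disjoint a b := by
  simp [matchFam]

lemma empty_mem_matchFam : ∅ ∈ matchFam G 0 := by
  simp [matchFam]

lemma matchFam_cover {k : ℕ} {M : Finset (Finset V)} (hM : M ∈ matchFam G k) :
    (M.biUnion id).card = 3 * k := by
  rw [mem_matchFam_iff] at hM
  obtain ⟨hcard, hcl, hdisj⟩ := hM
  have hb := Finset.card_biUnion (s := M) (t := id) (fun x hx y hy hxy => hdisj x hx y hy hxy)
  rw [hb]
  rw [← hcard, Finset.card_eq_sum_ones M, Finset.mul_sum]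
  refine sum_congr rfl fun T hT => ?_
  simpa using (SimpleGraph.mem_cliqueFinset_iff.1 (hcl T hT)).card_eq

lemma step_count {k : ℕ} :
    (((matchFam G k) ×ˢ (G.cliqueFinset 3)).filter
        (fun p => ∀ e ∈ p.1, Disjoint p.2 e)).card ≤ (k + 1) * (matchFam G (k+1)).card := by
  classical
  set P := ((matchFam G k) ×ˢ (G.cliqueFinset 3)).filter
      (fun p => ∀ e ∈ p.1, Disjoint p.2 e) with hP
  have hnotmem : ∀ p ∈ P, p.2 ∉ p.1 := by
    rintro ⟨M, T⟩ hp hmem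
    simp only [hP, mem_filter, mem_product] at hp
    have hd := hp.2 T hmem
    have hTe : T = ⊥ := disjoint_self.mp hd
    have hc3 := (SimpleGraph.mem_cliqueFinset_iff.1 hp.1.2).card_eq
    rw [hTe] at hc3
    simp at hc3
  have hmaps : ∀ p ∈ P, insert p.2 p.1 ∈ matchFam G (k+1) := by
    rintro ⟨M, T⟩ hp
    have hnm := hnotmem _ hp
    simp only [hP, mem_filter, mem_product, mem_matchFam_iff] at hp ⊢
    obtain ⟨⟨hM, hT⟩, hdis⟩ := hp
    refine ⟨by rw [card_insert_of_notMem hnm, hM.1], ?_, ?_⟩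
    · intro T' hT'
      rcases mem_insert.1 hT' with rfl | h
      · exact hT
      · exact hM.2.1 T' h
    · intro a ha b hb hab
      rcases mem_insert.1 ha with rfl | ha' <;> rcases mem_insert.1 hb with rfl | hb'
      · exact absurd rfl hab
      · exact hdis b hb'
      · exact (hdis a ha').symm
      · exact hM.2.2 a ha' b hb' hab
  refine le_trans (card_le_mul_card_image_of_maps_to hmaps (k+1) ?_) le_rfl
  intro N hN
  have hNcard : N.card = k + 1 := (mem_matchFam_iff G |>.1 hN).1
  calc #{p ∈ P | insert p.2 p.1 = N} ≤ N.card := by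
        refine card_le_card_of_injOn (fun p => p.2) ?_ ?_
        · rintro ⟨M, T⟩ hp
          simp only [coe_filter, Set.mem_setOf_eq] at hp
          rw [← hp.2]; exact mem_insert_self _ _
        · rintro ⟨M, T⟩ hp ⟨M', T'⟩ hp' heq
          simp only [coe_filter, Set.mem_setOf_eq] at hp hp'
          simp only at heq
          subst heq
          have h1 : M = N.erase T := by
            rw [← hp.2, erase_insert (hnotmem _ hp.1)]
          have h2 : M' = N.erase T := by
            rw [← hp'.2, erase_insert (hnotmem _ hp'.1)]
          rw [Prod.mk.injEq]
          exact ⟨h1.trans h2.symm, rfl⟩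
    _ = k + 1 := hNcard

lemma restrict_count (m : ℕ) (S : Finset (Finset V)) :
    ((matchFam G m).filter (fun M => S ⊆ M)).card ≤ (matchFam G (m - S.card)).card := by
  classical
  refine card_le_card_of_injOn (fun M => M \ S) ?_ ?_
  · intro M hM
    simp only [coe_filter, Set.mem_setOf_eq, mem_coe] at hM ⊢
    obtain ⟨hM, hS⟩ := hM
    rw [mem_matchFam_iff] at hM ⊢
    refine ⟨by rw [card_sdiff_of_subset hS, hM.1], fun T hT => hM.2.1 T (sdiff_subset hT),
      fun a ha b hb hab => hM.2.2 a (sdiff_subset ha) b (sdiff_subset hb) hab⟩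
  · intro M hM M' hM' heq
    simp only [coe_filter, Set.mem_setOf_eq] at hM hM'
    have h1 : M = (M \ S) ∪ S := by rw [sdiff_union_of_subset hM.2]
    have h2 : M' = (M' \ S) ∪ S := by rw [sdiff_union_of_subset hM'.2]
    simp only at heq
    rw [h1, h2, heq]



/-- For every `η ∈ (0,1]` there exist `ε > 0` and `n₀` such that: if `G` is a
`(q,β)`-bijumbled graph on `n ≥ n₀` vertices with `ε⁻¹·n^{-2/3} ≤ q ≤ 1` and
`β ≤ εq²n`, then there is a `(C₁/(q³n²))`-spread probability distribution, with
`C₁ = 18/η³`, on the set of matchings in the `K₃`-hypergraph of `G` covering at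
least `(1−η)n` vertices. -/
theorem stmt_12 :
    ∀ η : ℝ, 0 < η → η ≤ 1 →
    ∃ ε : ℝ, 0 < ε ∧ ∃ n₀ : ℕ,
      ∀ (V : Type) [Fintype V] [DecidableEq V]
        (G : SimpleGraph V) [DecidableRel G.Adj] (q β : ℝ),
        n₀ ≤ Fintype.card V →
        ε⁻¹ * (Fintype.card V : ℝ) ^ (-(2 : ℝ) / 3) ≤ q → q ≤ 1 →
        IsBijumbled G q β → β ≤ ε * q ^ 2 * (Fintype.card V : ℝ) →
        ∃ μ : Finset (Finset V) → ℝ,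
          (∀ M, 0 ≤ μ M) ∧
          (∑ M : Finset (Finset V), μ M = 1) ∧
          (∀ M : Finset (Finset V), μ M ≠ 0 →
            (∀ T ∈ M, T ∈ G.cliqueFinset 3) ∧
            ((M : Set (Finset V)).Pairwise fun a b => Disjoint a b) ∧
            (1 - η) * (Fintype.card V : ℝ) ≤ ((M.biUnion id).card : ℝ)) ∧
          (∀ S : Finset (Finset V),
            (∑ M ∈ univ.filter (fun M : Finset (Finset V) => S ⊆ M), μ M) ≤
              ((18 / η ^ 3) / (q ^ 3 * (Fintype.card V : ℝ) ^ 2)) ^ S.card) := by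
  intro η hη0 hη1
  refine ⟨η / 100, by positivity, 1, ?_⟩
  intro V _ _ G _ q β hn hqlo hq1 hbij hβ
  classical
  have hn1 : (1 : ℝ) ≤ (Fintype.card V : ℝ) := by exact_mod_cast hn
  have hn0 : (0 : ℝ) < (Fintype.card V : ℝ) := by linarith
  set nr : ℝ := (Fintype.card V : ℝ) with hnr
  clear_value nr
  have hq0 : 0 < q := by
    refine lt_of_lt_of_le ?_ hqlo
    have : (0:ℝ) < nr ^ (-(2:ℝ)/3) := Real.rpow_pos_of_pos hn0 _
    positivity
  have hβ0 : 0 ≤ β := by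
    obtain ⟨v⟩ := Fintype.card_pos_iff.1 (by omega : 0 < Fintype.card V)
    have h := hbij {v} {v}
    have he : epairs G {v} {v} = 0 := by
      simp [epairs, Finset.filter_eq_empty_iff]
    rw [he] at h
    simp only [Nat.cast_zero, card_singleton, Nat.cast_one, mul_one] at h
    have h1 : Real.sqrt 1 = 1 := Real.sqrt_one
    rw [h1] at h
    have := (abs_le.1 h).2
    nlinarith [(abs_le.1 h).1]
  set m : ℕ := ⌈(1 - η) * nr / 3⌉₊ with hm
  have h1η : 0 ≤ (1 - η) * nr / 3 := by
    have : 0 ≤ 1 - η := by linarith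
    positivity
  have hmle : (m : ℝ) ≤ (1 - η) * nr / 3 + 1 := by
    rw [hm]; exact le_of_lt (Nat.ceil_lt_add_one h1η)
  clear_value m
  set r : ℝ := (18 / η ^ 3) / (q ^ 3 * nr ^ 2) with hr
  have hr0 : 0 < r := by rw [hr]; positivity
  clear_value r
  -- per-step inequality
  have stepR : ∀ k, k < m → ((matchFam G k).card : ℝ) ≤ r * ((matchFam G (k+1)).card : ℝ) := by
    intro k hk
    set c : ℝ := q ^ 3 * (η * nr) ^ 3 / 11 with hc
    have hc0 : 0 < c := by rw [hc]; positivity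
    clear_value c
    have hmin : ∀ M ∈ matchFam G k,
        c ≤ (((G.cliqueFinset 3).filter (fun T => ∀ e ∈ M, Disjoint T e)).card : ℝ) := by
      intro M hM
      set W : Finset V := univ \ M.biUnion id with hW
      clear_value W
      have hcov : (M.biUnion id).card = 3 * k := matchFam_cover G hM
      have hsub : M.biUnion id ⊆ univ := subset_univ _
      have hWcard : (W.card : ℝ) = nr - 3 * k := by
        rw [hW, card_sdiff_of_subset hsub, card_univ]
        have h3k : 3 * k ≤ Fintype.card V := by
          rw [← hcov]; exact card_le_card hsub
        push_cast [hcov, Nat.cast_sub h3k]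
        rw [← hnr]
      have hkm : (k : ℝ) < (1 - η) * nr / 3 := by
        rw [hm] at hk
        exact_mod_cast Nat.lt_ceil.1 hk
      have hWn : η * nr ≤ (W.card : ℝ) := by rw [hWcard]; linarith
      have hβW : β ≤ q ^ 2 * (W.card : ℝ) / 100 := by
        have h1 : β ≤ η / 100 * q ^ 2 * nr := hβ
        nlinarith [sq_nonneg q, hq0]
      have h1 := tri_lower G hq0 hq1 hβ0 hbij W hβW
      have h2 : (((G.cliqueFinset 3).filter (· ⊆ W)).card : ℝ) ≤
          (((G.cliqueFinset 3).filter (fun T => ∀ e ∈ M, Disjoint T e)).card : ℝ) := by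
        have : ((G.cliqueFinset 3).filter (· ⊆ W)) ⊆
            ((G.cliqueFinset 3).filter (fun T => ∀ e ∈ M, Disjoint T e)) := by
          intro T hT
          simp only [mem_filter] at hT ⊢
          refine ⟨hT.1, fun e he => ?_⟩
          rw [Finset.disjoint_left]
          intro x hxT hxe
          have := hT.2 hxT
          rw [hW, mem_sdiff] at this
          exact this.2 (Finset.mem_biUnion.2 ⟨e, he, hxe⟩)
        exact_mod_cast card_le_card this
      have h3 : c ≤ q ^ 3 * (W.card : ℝ) ^ 3 / 11 := by
        have hp : (η * nr) ^ 3 ≤ (W.card : ℝ) ^ 3 :=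
          pow_le_pow_left₀ (by positivity) hWn 3
        rw [hc]
        have := mul_le_mul_of_nonneg_left hp (by positivity : (0:ℝ) ≤ q ^ 3)
        linarith
      linarith
    -- double counting
    have hsumlow : c * ((matchFam G k).card : ℝ) ≤
        (((((matchFam G k) ×ˢ (G.cliqueFinset 3)).filter
          (fun p => ∀ e ∈ p.1, Disjoint p.2 e)).card : ℕ) : ℝ) := by
      rw [my_card_filter_product (matchFam G k) (G.cliqueFinset 3)
        (fun M T => ∀ e ∈ M, Disjoint T e)]
      push_cast
      calc c * ((matchFam G k).card : ℝ)
          = ∑ _M ∈ matchFam G k, c := by rw [sum_const, nsmul_eq_mul]; ring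
        _ ≤ ∑ M ∈ matchFam G k,
            (((G.cliqueFinset 3).filter (fun T => ∀ e ∈ M, Disjoint T e)).card : ℝ) :=
            Finset.sum_le_sum hmin
    have hsumup := step_count G (k := k)
    have hsumupR : (((((matchFam G k) ×ˢ (G.cliqueFinset 3)).filter
          (fun p => ∀ e ∈ p.1, Disjoint p.2 e)).card : ℕ) : ℝ) ≤
        ((k : ℝ) + 1) * ((matchFam G (k+1)).card : ℝ) := by
      exact_mod_cast hsumup
    have hk1 : ((k : ℝ) + 1) ≤ r * c := by
      have hrc : r * c = 18 * nr / 11 := by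
        rw [hr, hc]
        field_simp
      rw [hrc]
      have hkm2 : ((k:ℝ) + 1) ≤ (m : ℝ) := by
        have : k + 1 ≤ m := hk
        exact_mod_cast this
      have : (1 - η) * nr ≤ nr := by nlinarith
      linarith
    have hmul : ((k : ℝ) + 1) * ((matchFam G (k+1)).card : ℝ) ≤
        r * c * ((matchFam G (k+1)).card : ℝ) :=
      mul_le_mul_of_nonneg_right hk1 (Nat.cast_nonneg _)
    have hfin : c * ((matchFam G k).card : ℝ) ≤ c * (r * ((matchFam G (k+1)).card : ℝ)) := by
      calc c * ((matchFam G k).card : ℝ) ≤ _ := hsumlow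
        _ ≤ ((k : ℝ) + 1) * ((matchFam G (k+1)).card : ℝ) := hsumupR
        _ ≤ r * c * ((matchFam G (k+1)).card : ℝ) := hmul
        _ = c * (r * ((matchFam G (k+1)).card : ℝ)) := by ring
    exact le_of_mul_le_mul_left hfin hc0
  -- chain
  have chain : ∀ t, t ≤ m → ((matchFam G (m - t)).card : ℝ) ≤ r ^ t * ((matchFam G m).card : ℝ) := by
    intro t
    induction t with
    | zero => intro _; simp
    | succ t ih =>
      intro ht
      have ht' : t ≤ m := by omega
      have hkey : m - (t + 1) + 1 = m - t := by omega
      have h1 := stepR (m - (t + 1)) (by omega)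
      rw [hkey] at h1
      calc ((matchFam G (m - (t+1))).card : ℝ) ≤ r * ((matchFam G (m - t)).card : ℝ) := h1
        _ ≤ r * (r ^ t * ((matchFam G m).card : ℝ)) :=
            mul_le_mul_of_nonneg_left (ih ht') hr0.le
        _ = r ^ (t + 1) * ((matchFam G m).card : ℝ) := by ring
  -- nonemptiness
  have hM0 : (1 : ℝ) ≤ ((matchFam G 0).card : ℝ) := by
    have : (matchFam G 0).Nonempty := ⟨∅, empty_mem_matchFam G⟩
    exact_mod_cast card_pos.2 this
  have hMm0 : (0 : ℝ) < ((matchFam G m).card : ℝ) := by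
    have h := chain m le_rfl
    rw [Nat.sub_self] at h
    by_contra hcon
    push_neg at hcon
    have : ((matchFam G m).card : ℝ) = 0 := le_antisymm hcon (Nat.cast_nonneg _)
    rw [this, mul_zero] at h
    linarith
  set D : ℝ := ((matchFam G m).card : ℝ) with hD
  clear_value D
  refine ⟨fun M => if M ∈ matchFam G m then D⁻¹ else 0, ?_, ?_, ?_, ?_⟩
  · intro M
    dsimp only
    split
    · positivity
    · exact le_rfl
  · rw [Finset.sum_ite_mem, univ_inter, sum_const, nsmul_eq_mul, ← hD]
    exact mul_inv_cancel₀ (ne_of_gt hMm0)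
  · intro M hMne
    have hMm : M ∈ matchFam G m := by
      by_contra hcon
      simp [hcon] at hMne
    obtain ⟨hcard, hcl, hdisj⟩ := (mem_matchFam_iff G).1 hMm
    refine ⟨hcl, fun a ha b hb hab => hdisj a ha b hb hab, ?_⟩
    have hcov : (M.biUnion id).card = 3 * m := matchFam_cover G hMm
    rw [hcov]
    have h1 : (1 - η) * nr / 3 ≤ (m : ℝ) := by rw [hm]; exact Nat.le_ceil _
    push_cast
    linarith
  · intro S
    have hLHS : (∑ M ∈ univ.filter (fun M : Finset (Finset V) => S ⊆ M),
        (if M ∈ matchFam G m then D⁻¹ else 0)) =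
        (((univ.filter (fun M : Finset (Finset V) => S ⊆ M)) ∩ matchFam G m).card : ℝ) * D⁻¹ := by
      rw [Finset.sum_ite_mem, sum_const, nsmul_eq_mul]
    rw [hLHS]
    have hsub : (univ.filter (fun M : Finset (Finset V) => S ⊆ M)) ∩ matchFam G m ⊆
        (matchFam G m).filter (fun M => S ⊆ M) := by
      intro M hM
      rw [mem_inter, mem_filter] at hM
      rw [mem_filter]
      exact ⟨hM.2, hM.1.2⟩
    by_cases hts : S.card ≤ m
    · have h1 : (((univ.filter (fun M : Finset (Finset V) => S ⊆ M)) ∩ matchFam G m).card : ℝ)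
          ≤ ((matchFam G (m - S.card)).card : ℝ) := by
        exact_mod_cast le_trans (card_le_card hsub) (restrict_count G m S)
      have h2 := chain S.card hts
      have h3 : (((univ.filter (fun M : Finset (Finset V) => S ⊆ M)) ∩ matchFam G m).card : ℝ) * D⁻¹
          ≤ (r ^ S.card * D) * D⁻¹ := by
        apply mul_le_mul_of_nonneg_right _ (inv_nonneg.2 hMm0.le)
        exact le_trans h1 h2
      calc _ ≤ (r ^ S.card * D) * D⁻¹ := h3
        _ = r ^ S.card := by field_simp
    · have hempty : (univ.filter (fun M : Finset (Finset V) => S ⊆ M)) ∩ matchFam G m = ∅ := by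
        rw [eq_empty_iff_forall_notMem]
        intro M hM
        rw [mem_inter, mem_filter] at hM
        have hcard : M.card = m := ((mem_matchFam_iff G).1 hM.2).1
        have := card_le_card hM.1.2
        omega
      rw [hempty]
      simp only [card_empty, Nat.cast_zero, zero_mul]
      positivity
end

section
/- Let H be a graph (on n vertices) in which every vertex has degree at least D, and suppose that for every vertex set Y with D/(2C) ≤ |Y| ≤ (C+1)n/log n (with D ≥ δ log n appropriately), the number of edges inside Y satisfies e(Y) ≤ (D/(2C))|Y|. Then for every set X with D/(2C) ≤ |X| ≤ n/log n, the external neighborhood satisfies |N(X)| ≥ C|X|. -/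
lemma degree_induce {V : Type*} [Fintype V] [DecidableEq V] (H : SimpleGraph V)
    [DecidableRel H.Adj] (S : Finset V) (v : V) (hv : v ∈ (↑S : Set V)) :
    (SimpleGraph.induce (↑S : Set V) H).degree ⟨v, hv⟩ = (H.neighborFinset v ∩ S).card := by
  rw [← SimpleGraph.card_neighborFinset_eq_degree]
  refine Finset.card_bij (fun w _ => (w : V)) ?_ ?_ ?_
  · rintro ⟨w, hw⟩ hadj
    simp only [SimpleGraph.mem_neighborFinset] at hadj
    simp only [Finset.mem_inter, SimpleGraph.mem_neighborFinset]
    exact ⟨hadj, hw⟩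
  · rintro ⟨a, _⟩ _ ⟨b, _⟩ _ h; exact Subtype.ext h
  · intro u hu
    simp only [Finset.mem_inter, SimpleGraph.mem_neighborFinset] at hu
    exact ⟨⟨u, hu.2⟩, by simpa [SimpleGraph.mem_neighborFinset] using hu.1, rfl⟩

lemma handshake_induce {V : Type*} [Fintype V] [DecidableEq V] (H : SimpleGraph V)
    [DecidableRel H.Adj] (S : Finset V) :
    2 * Nat.card (SimpleGraph.induce (↑S : Set V) H).edgeSet
      = ∑ v ∈ S, (H.neighborFinset v ∩ S).card := by
  rw [Nat.card_eq_fintype_card, ← SimpleGraph.edgeFinset_card,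
    ← SimpleGraph.sum_degrees_eq_twice_card_edges]
  rw [← Finset.sum_finset_coe (s := S)]
  exact Finset.sum_congr rfl (fun v _ => degree_induce H S v v.2)

lemma double_count {V : Type*} [Fintype V] [DecidableEq V] (H : SimpleGraph V)
    [DecidableRel H.Adj] (A B : Finset V) :
    ∑ v ∈ A, (H.neighborFinset v ∩ B).card = ∑ w ∈ B, (H.neighborFinset w ∩ A).card := by
  have h : ∀ (B : Finset V) (v : V),
      (H.neighborFinset v ∩ B) = B.filter (fun w => H.Adj v w) := by
    intro B v; ext w; simp [SimpleGraph.mem_neighborFinset, and_comm]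
  simp only [h]
  simp only [Finset.card_filter]
  rw [Finset.sum_comm]
  exact Finset.sum_congr rfl fun w _ => Finset.sum_congr rfl fun v _ =>
    if_congr (H.adj_comm v w) rfl rfl

/-- Let `H` be a graph on `n` vertices in which every vertex has degree at least
`D > 0`, with `C ≥ 2`. Suppose that every vertex set `Y` with
`D/(2C) ≤ |Y| ≤ (C+1)n/log n` spans at most `(D/(2C))|Y|` edges. Then every set `X`
with `D/(2C) ≤ |X| ≤ n/log n` satisfies `|N(X)| ≥ C|X|`. -/
theorem stmt_18 {V : Type*} [Fintype V] [DecidableEq V] (H : SimpleGraph V)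
    [DecidableRel H.Adj] (C D : ℝ) (hC : 2 ≤ C) (hD : 0 < D)
    (hdeg : ∀ v : V, D ≤ (H.degree v : ℝ))
    (he : ∀ Y : Finset V, D / (2 * C) ≤ (Y.card : ℝ) →
      (Y.card : ℝ) ≤ (C + 1) * (Fintype.card V : ℝ) / Real.log (Fintype.card V) →
      (Nat.card (SimpleGraph.induce (↑Y : Set V) H).edgeSet : ℝ) ≤
        D / (2 * C) * Y.card) :
    ∀ X : Finset V, D / (2 * C) ≤ (X.card : ℝ) →
      (X.card : ℝ) ≤ (Fintype.card V : ℝ) / Real.log (Fintype.card V) →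
      C * X.card ≤ ((extNbhd H X).card : ℝ) := by
  intro X hX1 hX2
  by_contra hcon
  push_neg at hcon
  have hCpos : (0:ℝ) < C := by linarith
  have hXpos : (0:ℝ) < X.card := lt_of_lt_of_le (by positivity) hX1
  have hXne : X.Nonempty := Finset.card_pos.mp (by exact_mod_cast hXpos)
  have hn1 : 1 ≤ Fintype.card V := by
    obtain ⟨v, _⟩ := hXne
    exact Fintype.card_pos_iff.mpr ⟨v⟩
  have hn2 : 2 ≤ Fintype.card V := by
    by_contra h
    push_neg at h
    have h1 : Fintype.card V = 1 := by omega
    rw [h1] at hX2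
    simp [Real.log_one] at hX2
    exact hXne.ne_empty hX2
  have hlog : 0 < Real.log (Fintype.card V) := Real.log_pos (by exact_mod_cast hn2)
  have hnn : (0:ℝ) ≤ (Fintype.card V : ℝ) / Real.log (Fintype.card V) := by positivity
  set N := extNbhd H X with hNdef
  have hdisj : Disjoint X N := by
    rw [Finset.disjoint_left]
    intro a ha hb
    rw [hNdef, extNbhd, Finset.mem_filter] at hb
    exact hb.2.1 ha
  set Y := X ∪ N with hYdef
  have hXY : X ⊆ Y := Finset.subset_union_left
  have hYcard : Y.card = X.card + N.card := Finset.card_union_of_disjoint hdisj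
  have hYlt : (Y.card : ℝ) < (C+1) * X.card := by
    rw [hYcard]; push_cast; nlinarith
  have hYlb : D/(2*C) ≤ (Y.card:ℝ) :=
    le_trans hX1 (by exact_mod_cast Finset.card_le_card hXY)
  have hX2' : (X.card:ℝ) ≤ (C+1) * (Fintype.card V) / Real.log (Fintype.card V) := by
    rw [mul_div_assoc]
    nlinarith
  have hYub : (Y.card:ℝ) ≤ (C+1) * (Fintype.card V) / Real.log (Fintype.card V) := by
    rw [mul_div_assoc]
    have h1 : (C+1) * X.card ≤ (C+1) * ((Fintype.card V : ℝ) / Real.log (Fintype.card V)) :=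
      mul_le_mul_of_nonneg_left hX2 (by linarith)
    linarith
  have heY := he Y hYlb hYub
  have heX := he X hX1 hX2'
  -- counting
  have hsub : ∀ v ∈ X, H.neighborFinset v ∩ Y = H.neighborFinset v := by
    intro v hv
    apply Finset.inter_eq_left.mpr
    intro w hw
    rw [SimpleGraph.mem_neighborFinset] at hw
    by_cases hwX : w ∈ X
    · exact Finset.mem_union_left _ hwX
    · refine Finset.mem_union_right _ ?_
      rw [hNdef, extNbhd, Finset.mem_filter]
      exact ⟨Finset.mem_univ _, hwX, v, hv, hw⟩
  have hsplit : ∀ v ∈ X, H.degree v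
      = (H.neighborFinset v ∩ X).card + (H.neighborFinset v ∩ N).card := by
    intro v hv
    have hd : Disjoint (H.neighborFinset v ∩ X) (H.neighborFinset v ∩ N) :=
      Finset.disjoint_of_subset_left Finset.inter_subset_right
        (Finset.disjoint_of_subset_right Finset.inter_subset_right hdisj)
    rw [← SimpleGraph.card_neighborFinset_eq_degree]
    conv_lhs => rw [← hsub v hv]
    rw [hYdef, Finset.inter_union_distrib_left, Finset.card_union_of_disjoint hd]
  have hHY := handshake_induce H Y
  have hHX := handshake_induce H X
  have hsumY : ∑ v ∈ Y, (H.neighborFinset v ∩ Y).card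
      = ∑ v ∈ X, (H.neighborFinset v ∩ Y).card + ∑ v ∈ N, (H.neighborFinset v ∩ Y).card := by
    rw [hYdef, Finset.sum_union hdisj]
  have hsumX : ∑ v ∈ X, (H.neighborFinset v ∩ Y).card = ∑ v ∈ X, H.degree v :=
    Finset.sum_congr rfl fun v hv => by
      rw [hsub v hv, SimpleGraph.card_neighborFinset_eq_degree]
  have hsumN : ∑ v ∈ X, (H.neighborFinset v ∩ N).card
      ≤ ∑ v ∈ N, (H.neighborFinset v ∩ Y).card := by
    rw [double_count H X N]
    exact Finset.sum_le_sum fun v _ =>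
      Finset.card_le_card (Finset.inter_subset_inter_left hXY)
  have hdegsum : ∑ v ∈ X, H.degree v
      = ∑ v ∈ X, (H.neighborFinset v ∩ X).card + ∑ v ∈ X, (H.neighborFinset v ∩ N).card := by
    rw [← Finset.sum_add_distrib]
    exact Finset.sum_congr rfl hsplit
  have key : ∑ v ∈ X, H.degree v
      ≤ Nat.card (SimpleGraph.induce (↑Y : Set V) H).edgeSet
        + Nat.card (SimpleGraph.induce (↑X : Set V) H).edgeSet := by omega
  have keyR : D * X.card ≤ (Nat.card (SimpleGraph.induce (↑Y : Set V) H).edgeSet : ℝ)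
      + (Nat.card (SimpleGraph.induce (↑X : Set V) H).edgeSet : ℝ) := by
    have h1 : D * X.card ≤ (∑ v ∈ X, (H.degree v : ℝ)) := by
      calc D * X.card = ∑ _v ∈ X, D := by rw [Finset.sum_const, nsmul_eq_mul, mul_comm]
      _ ≤ _ := Finset.sum_le_sum fun v _ => hdeg v
    have h2 : ((∑ v ∈ X, H.degree v : ℕ) : ℝ)
        ≤ (Nat.card (SimpleGraph.induce (↑Y : Set V) H).edgeSet : ℝ)
          + (Nat.card (SimpleGraph.induce (↑X : Set V) H).edgeSet : ℝ) := by
      exact_mod_cast key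
    rw [Nat.cast_sum] at h2
    linarith
  -- final contradiction
  have hrpos : 0 < D / (2*C) := by positivity
  have step1 : (Nat.card (SimpleGraph.induce (↑Y : Set V) H).edgeSet : ℝ)
      + (Nat.card (SimpleGraph.induce (↑X : Set V) H).edgeSet : ℝ)
      < D/(2*C) * ((C+1) * X.card) + D/(2*C) * X.card := by
    have := mul_lt_mul_of_pos_left hYlt hrpos
    linarith
  have step2 : D/(2*C) * ((C+1) * X.card) + D/(2*C) * X.card ≤ D * X.card := by
    have hrD : D / (2*C) * (2*C) = D := by field_simp
    nlinarith [hrpos.le, hXpos.le]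
  linarith
end
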